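/- arXiv:2406.04243 — 4 statements merged into one kernel-verified Lean document; each statement's English description precedes it below -/
import Mathlib

section
/- If m ≥ 2 and S = {K ∈ ℝ^{m×n} : ρ(A+BK) < 1} is nonempty, then S is unbounded. -/
open Matrix

/-- Spectral radius of a real square matrix via its complexification. -/
noncomputable def specRad {ι : Type*} [Fintype ι] [DecidableEq ι]
    (M : Matrix ι ι ℝ) : ENNReal :=
  spectralRadius ℂ (M.map (algebraMap ℝ ℂ))

attribute [local instance] Matrix.normedAddCommGroup

namespace StabHelper

open Polynomial

variable {n : ℕ}

noncomputable def gpair (M : Matrix (Fin n) (Fin n) ℝ) (z w : Fin n → ℝ) : Polynomial ℝ :=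
  (fun i => Polynomial.C (w i)) ⬝ᵥ ((charmatrix M).adjugate *ᵥ fun j => Polynomial.C (z j))

lemma charmatrix_map_eval {R : Type*} [CommRing R] (M : Matrix (Fin n) (Fin n) R) (x : R) :
    (charmatrix M).map (Polynomial.eval x) = x • (1 : Matrix (Fin n) (Fin n) R) - M := by
  ext i j
  by_cases h : i = j
  · subst h
    simp [charmatrix_apply_eq]
  · simp [charmatrix_apply_ne _ _ _ h, Matrix.one_apply_ne h]

lemma eval_charpoly' {R : Type*} [CommRing R] (M : Matrix (Fin n) (Fin n) R) (x : R) :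
    (Matrix.charpoly M).eval x
      = Matrix.det (x • (1 : Matrix (Fin n) (Fin n) R) - M) := by
  have h := RingHom.map_det (Polynomial.evalRingHom x) (charmatrix M)
  rw [Matrix.charpoly]
  have h2 : (Polynomial.evalRingHom x).mapMatrix (charmatrix M)
      = x • (1 : Matrix (Fin n) (Fin n) R) - M := by
    rw [RingHom.mapMatrix_apply]
    exact charmatrix_map_eval M x
  rw [← h2, ← h]
  rfl

lemma eval_gpair (M : Matrix (Fin n) (Fin n) ℝ) (z w : Fin n → ℝ) (x : ℝ)
    (S : Matrix (Fin n) (Fin n) ℝ) (hS : S = x • (1 : Matrix (Fin n) (Fin n) ℝ) - M) :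
    (gpair M z w).eval x = w ⬝ᵥ (S.adjugate *ᵥ z) := by
  have hadj : ((charmatrix M).adjugate).map (Polynomial.eval x) = S.adjugate := by
    have h := RingHom.map_adjugate (Polynomial.evalRingHom x) (charmatrix M)
    rw [RingHom.mapMatrix_apply] at h
    rw [hS, ← charmatrix_map_eval M x]
    exact h
  rw [← hadj]
  simp only [gpair, dotProduct, mulVec, eval_finset_sum, eval_mul, eval_C, map_apply]

lemma charpoly_add_vecMulVec (M : Matrix (Fin n) (Fin n) ℝ) (z w : Fin n → ℝ) :
    (M + vecMulVec z w).charpoly = M.charpoly - gpair M z w := by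
  apply Polynomial.eq_of_infinite_eval_eq
  have hfin : Set.Finite {x : ℝ | M.charpoly.IsRoot x} :=
    Polynomial.finite_setOf_isRoot (M.charpoly_monic.ne_zero)
  have hsub : {x : ℝ | M.charpoly.IsRoot x}ᶜ ⊆
      {x : ℝ | (M + vecMulVec z w).charpoly.eval x = (M.charpoly - gpair M z w).eval x} := by
    intro x hx
    have hdet : (x • (1 : Matrix (Fin n) (Fin n) ℝ) - M).det ≠ 0 := by
      rw [← eval_charpoly']
      exact hx
    set S : Matrix (Fin n) (Fin n) ℝ := x • (1 : Matrix (Fin n) (Fin n) ℝ) - M with hSdef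
    have hunit : IsUnit S.det := isUnit_iff_ne_zero.2 hdet
    have hL : (M + vecMulVec z w).charpoly.eval x
        = (S + Matrix.replicateCol Unit (-z) * Matrix.replicateRow Unit w).det := by
      rw [eval_charpoly']
      congr 1
      ext i j
      simp [hSdef, vecMulVec_apply, Matrix.mul_apply, Matrix.replicateCol, Matrix.replicateRow, Matrix.sub_apply,
        Matrix.add_apply, Matrix.smul_apply]
      ring
    show (M + vecMulVec z w).charpoly.eval x = (M.charpoly - gpair M z w).eval x
    rw [hL, Matrix.det_add_replicateCol_mul_replicateRow hunit]
    have h11 : (1 + Matrix.replicateRow Unit w * S⁻¹ * Matrix.replicateCol Unit (-z)).det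
        = 1 - w ⬝ᵥ (S⁻¹ *ᵥ z) := by
      rw [Matrix.mul_assoc, ← Matrix.replicateCol_mulVec, Matrix.det_unique]
      simp only [Matrix.add_apply, Matrix.one_apply_eq, Matrix.replicateRow_mul_replicateCol_apply,
        Matrix.mulVec_neg, dotProduct_neg]
      ring
    have hadj2 : S.adjugate = S.det • S⁻¹ := by
      rw [Matrix.inv_def, smul_smul, Ring.mul_inverse_cancel _ hunit, one_smul]
    have hR : (M.charpoly - gpair M z w).eval x
        = S.det - S.det * (w ⬝ᵥ (S⁻¹ *ᵥ z)) := by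
      rw [eval_sub, eval_charpoly', eval_gpair M z w x S hSdef, hadj2,
        Matrix.smul_mulVec, dotProduct_smul, smul_eq_mul]
    rw [hR, h11]
    ring
  exact Set.Infinite.mono hsub hfin.infinite_compl

lemma gpair_eq_zero_left_null {M : Matrix (Fin n) (Fin n) ℝ} {z w : Fin n → ℝ}
    (hw : w ᵥ* M = 0) (hz : w ⬝ᵥ z = 0) : gpair M z w = 0 := by
  set W : Fin n → ℝ[X] := fun i => Polynomial.C (w i) with hW
  set Z : Fin n → ℝ[X] := fun j => Polynomial.C (z j) with hZ
  have h1 : W ᵥ* charmatrix M = (X : ℝ[X]) • W := by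
    funext j
    have : ∀ i, W i * charmatrix M i j
        = (if i = j then X * Polynomial.C (w j) else 0) - Polynomial.C (w i * M i j) := by
      intro i
      by_cases h : i = j
      · subst h
        rw [charmatrix_apply_eq, if_pos rfl, _root_.map_mul]
        show C (w i) * (X - C (M i i)) = _
        ring
      · rw [charmatrix_apply_ne _ _ _ h, if_neg h, _root_.map_mul]
        show C (w i) * -C (M i j) = _
        ring
    show ∑ i, W i * charmatrix M i j = _
    rw [Finset.sum_congr rfl fun i _ => this i, Finset.sum_sub_distrib,
      Finset.sum_ite_eq' Finset.univ j (fun _ => X * Polynomial.C (w j))]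
    have h2 : ∑ i, Polynomial.C (w i * M i j) = Polynomial.C ((w ᵥ* M) j) := by
      rw [← map_sum]
      rfl
    rw [h2, hw]
    show (if j ∈ Finset.univ then X * C (w j) else 0) - C ((0 : Fin n → ℝ) j) = ((X : ℝ[X]) • W) j
    rw [if_pos (Finset.mem_univ j)]
    simp only [Pi.zero_apply, map_zero, sub_zero, Pi.smul_apply, smul_eq_mul, hW]
  have key : X * gpair M z w = 0 := by
    have : X * gpair M z w = ((X : ℝ[X]) • W) ⬝ᵥ ((charmatrix M).adjugate *ᵥ Z) := by
      rw [smul_dotProduct]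
      simp [gpair, smul_eq_mul]
      rfl
    rw [this, ← h1, ← Matrix.dotProduct_mulVec, Matrix.mulVec_mulVec,
      Matrix.mul_adjugate, ← Matrix.charpoly]
    rw [Matrix.smul_mulVec, Matrix.one_mulVec, dotProduct_smul]
    have hWZ : W ⬝ᵥ Z = Polynomial.C (w ⬝ᵥ z) := by
      show ∑ i, C (w i) * C (z i) = C (∑ i, w i * z i)
      rw [map_sum C (fun i => w i * z i) Finset.univ]
      exact Finset.sum_congr rfl fun i _ => (map_mul C (w i) (z i)).symm
    rw [hWZ, hz, map_zero, smul_zero]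
  have hX : (X : ℝ[X]) ≠ 0 := Polynomial.X_ne_zero
  rcases mul_eq_zero.1 key with h | h
  · exact absurd h hX
  · exact h

noncomputable def adjCoeff (M : Matrix (Fin n) (Fin n) ℝ) (k : ℕ) :
    Matrix (Fin n) (Fin n) ℝ :=
  (matPolyEquiv (charmatrix M).adjugate).coeff k

lemma adj_identity (M : Matrix (Fin n) (Fin n) ℝ) :
    matPolyEquiv (charmatrix M).adjugate * (X - Polynomial.C M)
      = (M.charpoly).map (algebraMap ℝ (Matrix (Fin n) (Fin n) ℝ)) := by
  have h := Matrix.adjugate_mul (charmatrix M)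
  have h2 := congrArg matPolyEquiv h
  rwa [_root_.map_mul, matPolyEquiv_charmatrix, ← Matrix.charpoly,
    matPolyEquiv_smul_one] at h2

lemma adjCoeff_rec (M : Matrix (Fin n) (Fin n) ℝ) (k : ℕ) :
    adjCoeff M k = M.charpoly.coeff (k+1) • 1 + adjCoeff M (k+1) * M := by
  have h := congrArg (fun p => Polynomial.coeff p (k+1)) (adj_identity M)
  simp only [mul_sub, Polynomial.coeff_sub, Polynomial.coeff_mul_X,
    Polynomial.coeff_mul_C, Polynomial.coeff_map] at h
  have h2 : algebraMap ℝ (Matrix (Fin n) (Fin n) ℝ) (M.charpoly.coeff (k+1))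
      = M.charpoly.coeff (k+1) • 1 := Algebra.algebraMap_eq_smul_one _
  rw [h2] at h
  unfold adjCoeff
  have := sub_eq_iff_eq_add.1 h
  rw [this]

lemma charpoly_coeff_eq_zero_of_gt (M : Matrix (Fin n) (Fin n) ℝ) {k : ℕ} (hk : n < k) :
    M.charpoly.coeff k = 0 := by
  apply Polynomial.coeff_eq_zero_of_natDegree_lt
  rw [Matrix.charpoly_natDegree_eq_dim, Fintype.card_fin]
  exact hk

lemma adjCoeff_eq_zero (M : Matrix (Fin n) (Fin n) ℝ) {k : ℕ} (hk : n ≤ k) :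
    adjCoeff M k = 0 := by
  have key : ∀ r, adjCoeff M k = adjCoeff M (k + r) * M ^ r := by
    intro r
    induction r with
    | zero => simp
    | succ r ih =>
      rw [ih, adjCoeff_rec M (k+r), charpoly_coeff_eq_zero_of_gt M (by omega),
        zero_smul, zero_add, Matrix.mul_assoc, ← pow_succ']
      rfl
  have hz : adjCoeff M (k + ((matPolyEquiv (charmatrix M).adjugate).natDegree + 1)) = 0 := by
    apply Polynomial.coeff_eq_zero_of_natDegree_lt
    omega
  rw [key ((matPolyEquiv (charmatrix M).adjugate).natDegree + 1), hz, Matrix.zero_mul]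

lemma adjCoeff_formula (M : Matrix (Fin n) (Fin n) ℝ) :
    ∀ (d k : ℕ), n ≤ k + d →
    adjCoeff M k = ∑ i ∈ Finset.range (n - k), M.charpoly.coeff (k+1+i) • M ^ i := by
  intro d
  induction d with
  | zero =>
    intro k hk
    rw [adjCoeff_eq_zero M (by omega), Nat.sub_eq_zero_of_le (by omega)]
    simp
  | succ d ih =>
    intro k hk
    rcases le_or_gt n (k + d) with h | h
    · exact ih k h
    · have hkn : k < n := by omega
      have hs : n - k = (n - (k+1)) + 1 := by omega
      rw [adjCoeff_rec, ih (k+1) (by omega), hs, Finset.sum_range_succ',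
        Finset.sum_mul]
      have e1 : ∀ i, (M.charpoly.coeff (k+1+1+i) • M ^ i) * M
          = M.charpoly.coeff (k+1+(i+1)) • M ^ (i+1) := by
        intro i
        rw [smul_mul_assoc, ← pow_succ]
        congr 2
        omega
      rw [Finset.sum_congr rfl fun i _ => e1 i]
      have e2 : M.charpoly.coeff (k+1+0) • M ^ 0 = M.charpoly.coeff (k+1) • 1 := by
        simp
      rw [e2]
      exact add_comm _ _

lemma gpair_coeff (M : Matrix (Fin n) (Fin n) ℝ) (z w : Fin n → ℝ) (k : ℕ) :
    (gpair M z w).coeff k = w ⬝ᵥ (adjCoeff M k *ᵥ z) := by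
  unfold gpair adjCoeff
  simp only [dotProduct, mulVec, Polynomial.finset_sum_coeff, Polynomial.coeff_C_mul,
    Polynomial.coeff_mul_C, matPolyEquiv_coeff_apply]

lemma gpair_eq_zero_krylov {M : Matrix (Fin n) (Fin n) ℝ} {b c : Fin n → ℝ}
    (h : ∀ k : ℕ, c ⬝ᵥ (M ^ k *ᵥ b) = 0) : gpair M b c = 0 := by
  ext k
  rw [gpair_coeff, Polynomial.coeff_zero]
  rw [adjCoeff_formula M n k (by omega)]
  have hsum : (∑ i ∈ Finset.range (n - k), M.charpoly.coeff (k+1+i) • M ^ i) *ᵥ b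
      = ∑ i ∈ Finset.range (n - k), M.charpoly.coeff (k+1+i) • (M ^ i *ᵥ b) := by
    ext l
    simp only [Matrix.sum_apply, Finset.sum_apply, Matrix.smul_apply, smul_eq_mul, mulVec,
      dotProduct, Pi.smul_apply, Finset.sum_mul, Finset.mul_sum, mul_assoc]
    rw [Finset.sum_comm]
  rw [hsum]
  have hdot : c ⬝ᵥ (∑ i ∈ Finset.range (n - k), M.charpoly.coeff (k+1+i) • (M ^ i *ᵥ b))
      = ∑ i ∈ Finset.range (n - k), M.charpoly.coeff (k+1+i) * (c ⬝ᵥ (M ^ i *ᵥ b)) := by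
    simp only [dotProduct, Finset.sum_apply, Pi.smul_apply, smul_eq_mul, Finset.mul_sum]
    rw [Finset.sum_comm]
    refine Finset.sum_congr rfl fun i _ => Finset.sum_congr rfl fun x _ => by ring
  rw [hdot]
  refine Finset.sum_eq_zero fun i _ => ?_
  rw [h i, mul_zero]

lemma charpoly_coeff_top (M : Matrix (Fin n) (Fin n) ℝ) : M.charpoly.coeff n = 1 := by
  have h := M.charpoly_monic
  rw [Polynomial.Monic, Polynomial.leadingCoeff, Matrix.charpoly_natDegree_eq_dim,
    Fintype.card_fin] at h
  exact h

lemma pow_n_mulVec (M : Matrix (Fin n) (Fin n) ℝ) (b : Fin n → ℝ) :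
    M ^ n *ᵥ b = -∑ j ∈ Finset.range n, M.charpoly.coeff j • (M ^ j *ᵥ b) := by
  have hCH := Matrix.aeval_self_charpoly M
  rw [Polynomial.aeval_eq_sum_range, Matrix.charpoly_natDegree_eq_dim, Fintype.card_fin,
    Finset.sum_range_succ, charpoly_coeff_top, one_smul] at hCH
  have hMn : M ^ n = -∑ j ∈ Finset.range n, M.charpoly.coeff j • M ^ j :=
    eq_neg_of_add_eq_zero_right hCH
  rw [hMn]
  ext l
  simp only [Matrix.neg_mulVec, Pi.neg_apply, neg_inj]
  simp only [Matrix.sum_apply, mulVec, dotProduct, Matrix.smul_apply, smul_eq_mul,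
    Finset.sum_apply, Pi.smul_apply, Finset.sum_mul, Finset.mul_sum, mul_assoc]
  rw [Finset.sum_comm]

lemma dot_krylov_ext (M : Matrix (Fin n) (Fin n) ℝ) (b c : Fin n → ℝ)
    (h : ∀ k < n, c ⬝ᵥ (M ^ k *ᵥ b) = 0) : ∀ k, c ⬝ᵥ (M ^ k *ᵥ b) = 0 := by
  intro k
  induction k using Nat.strong_induction_on with
  | _ k ih =>
    rcases lt_or_ge k n with hk | hk
    · exact h k hk
    · have hdecomp : M ^ k *ᵥ b = M ^ (k - n) *ᵥ (M ^ n *ᵥ b) := by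
        rw [Matrix.mulVec_mulVec, ← pow_add, Nat.sub_add_cancel hk]
      rw [hdecomp, pow_n_mulVec, Matrix.mulVec_neg, dotProduct_neg]
      have hsum : M ^ (k-n) *ᵥ (∑ j ∈ Finset.range n, M.charpoly.coeff j • (M ^ j *ᵥ b))
          = ∑ j ∈ Finset.range n, M.charpoly.coeff j • (M ^ (k-n+j) *ᵥ b) := by
        have hmap := map_sum (Matrix.mulVecLin (M ^ (k-n)))
          (fun j => M.charpoly.coeff j • (M ^ j *ᵥ b)) (Finset.range n)
        simp only [Matrix.mulVecLin_apply, LinearMap.map_smul] at hmap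
        rw [hmap]
        refine Finset.sum_congr rfl fun j _ => ?_
        rw [Matrix.mulVec_mulVec, ← pow_add]
      rw [hsum]
      have hdot : c ⬝ᵥ (∑ j ∈ Finset.range n, M.charpoly.coeff j • (M ^ (k-n+j) *ᵥ b))
          = ∑ j ∈ Finset.range n, M.charpoly.coeff j * (c ⬝ᵥ (M ^ (k-n+j) *ᵥ b)) := by
        simp only [dotProduct, Finset.sum_apply, Pi.smul_apply, smul_eq_mul, Finset.mul_sum]
        rw [Finset.sum_comm]
        exact Finset.sum_congr rfl fun i _ => Finset.sum_congr rfl fun x _ => by ring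
      rw [hdot]
      have : ∀ j ∈ Finset.range n, M.charpoly.coeff j * (c ⬝ᵥ (M ^ (k-n+j) *ᵥ b)) = 0 := by
        intro j hj
        rw [ih (k-n+j) (by simp at hj; omega), mul_zero]
      rw [Finset.sum_congr rfl this, Finset.sum_const_zero, neg_zero]

lemma pole_placement (M : Matrix (Fin n) (Fin n) ℝ) (b : Fin n → ℝ)
    (hdet : (Matrix.of fun r k : Fin n => (M ^ (k : ℕ) *ᵥ b) r).det ≠ 0) :
    ∃ c : Fin n → ℝ, (M + vecMulVec b c).charpoly = X ^ n := by
  set 𝒦 : Matrix (Fin n) (Fin n) ℝ := Matrix.of (fun r k : Fin n => (M ^ (k : ℕ) *ᵥ b) r)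
    with hK
  set L : Matrix (Fin n) (Fin n) ℝ :=
    Matrix.of (fun k i : Fin n =>
      if (i : ℕ) < n - (k : ℕ) then M.charpoly.coeff ((k : ℕ)+1+(i : ℕ)) else 0) with hL
  set U : Matrix (Fin n) (Fin n) ℝ := L * 𝒦ᵀ with hU
  have hrow : ∀ k : Fin n, ∀ l, U k l = (adjCoeff M (k : ℕ) *ᵥ b) l := by
    intro k l
    have e1 : U k l = ∑ i ∈ Finset.range n,
        (if i < n - (k : ℕ) then M.charpoly.coeff ((k : ℕ)+1+i) * ((M ^ i *ᵥ b) l) else 0) := by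
      rw [hU, Matrix.mul_apply, ← Fin.sum_univ_eq_sum_range]
      refine Finset.sum_congr rfl fun i _ => ?_
      rw [hL, hK]
      simp only [Matrix.of_apply, Matrix.transpose_apply, ite_mul, zero_mul]
    have e2 : (adjCoeff M (k : ℕ) *ᵥ b) l = ∑ i ∈ Finset.range (n - (k : ℕ)),
        M.charpoly.coeff ((k : ℕ)+1+i) * ((M ^ i *ᵥ b) l) := by
      rw [adjCoeff_formula M n (k : ℕ) (by omega)]
      simp only [Matrix.sum_apply, mulVec, dotProduct, Matrix.smul_apply, smul_eq_mul,
        Finset.sum_apply, Pi.smul_apply, Finset.sum_mul, Finset.mul_sum, mul_assoc]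
      rw [Finset.sum_comm]
    rw [e1, e2]
    rw [← Finset.sum_subset (Finset.range_subset_range.2 (Nat.sub_le n (k : ℕ)))
      (fun i _ hi => by rw [if_neg (by simp at hi ⊢; omega)])]
    refine Finset.sum_congr rfl fun i hi => ?_
    rw [if_pos (Finset.mem_range.1 hi)]
  have hLdet : L.det ≠ 0 := by
    have hRdet : (L.submatrix id ⇑(Fin.revPerm : Equiv.Perm (Fin n))).det = 1 := by
      rw [Matrix.det_of_upperTriangular]
      · refine Finset.prod_eq_one fun k _ => ?_
        have hkn : (k : ℕ) < n := k.isLt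
        have hcond : n - 1 - (k : ℕ) < n - (k : ℕ) := by omega
        have hidx : (k : ℕ) + 1 + (n - 1 - (k : ℕ)) = n := by omega
        simp only [Matrix.submatrix_apply, id_eq, Fin.revPerm_apply, hL, Matrix.of_apply]
        rw [Fin.val_rev]
        rw [if_pos (by omega), show (k : ℕ) + 1 + (n - ((k : ℕ) + 1)) = n by omega]
        exact charpoly_coeff_top M
      · intro i j hij
        simp only [Matrix.submatrix_apply, id_eq, Fin.revPerm_apply, hL, Matrix.of_apply]
        rw [Fin.val_rev]
        rw [if_neg (by have := i.isLt; have := j.isLt; simp at hij ⊢; omega)]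
    intro h0
    have := Matrix.det_permute' (Fin.revPerm : Equiv.Perm (Fin n)) L
    rw [hRdet, h0, mul_zero] at this
    exact one_ne_zero this
  have hUdet : U.det ≠ 0 := by
    rw [hU, Matrix.det_mul, Matrix.det_transpose]
    exact mul_ne_zero hLdet hdet
  set c : Fin n → ℝ := U⁻¹ *ᵥ (fun l : Fin n => M.charpoly.coeff (l : ℕ)) with hc
  have hsol : U *ᵥ c = fun l : Fin n => M.charpoly.coeff (l : ℕ) := by
    rw [hc, Matrix.mulVec_mulVec, Matrix.mul_nonsing_inv U (isUnit_iff_ne_zero.2 hUdet),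
      Matrix.one_mulVec]
  refine ⟨c, ?_⟩
  rw [charpoly_add_vecMulVec]
  have hg : ∀ k : ℕ, (gpair M b c).coeff k
      = if k < n then M.charpoly.coeff k else 0 := by
    intro k
    rw [gpair_coeff]
    by_cases hk : k < n
    · rw [if_pos hk]
      have h1 : c ⬝ᵥ (adjCoeff M k *ᵥ b) = (U *ᵥ c) ⟨k, hk⟩ := by
        show (∑ j, c j * (adjCoeff M k *ᵥ b) j) = ∑ j, U ⟨k, hk⟩ j * c j
        refine Finset.sum_congr rfl fun j _ => ?_
        rw [hrow ⟨k, hk⟩ j]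
        ring
      rw [h1, hsol]
    · rw [if_neg hk, adjCoeff_eq_zero M (by omega), Matrix.zero_mulVec, dotProduct_zero]
  ext k
  rw [Polynomial.coeff_sub, hg k, Polynomial.coeff_X_pow]
  by_cases hk : k < n
  · rw [if_pos hk, if_neg (by omega)]
    ring
  · rw [if_neg hk]
    rcases Nat.eq_or_lt_of_le (not_lt.1 hk) with h | h
    · rw [← h, if_pos rfl, charpoly_coeff_top, sub_zero]
    · rw [if_neg (by omega), charpoly_coeff_eq_zero_of_gt M h, sub_zero]

lemma mul_vecMulVec {m : ℕ} (B : Matrix (Fin n) (Fin m) ℝ) (v : Fin m → ℝ) (w : Fin n → ℝ) :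
    B * vecMulVec v w = vecMulVec (B *ᵥ v) w := by
  ext i j
  simp only [Matrix.mul_apply, vecMulVec_apply, mulVec, dotProduct, Finset.sum_mul, mul_assoc]

lemma smul_vecMulVec {m : ℕ} (t : ℝ) (v : Fin m → ℝ) (w : Fin n → ℝ) :
    t • vecMulVec v w = vecMulVec v (t • w) := by
  ext i j
  simp only [Matrix.smul_apply, vecMulVec_apply, Pi.smul_apply, smul_eq_mul]
  ring

lemma mem_spectrum_iff_root {N : Matrix (Fin n) (Fin n) ℂ} {μ : ℂ} :
    μ ∈ spectrum ℂ N ↔ (Matrix.charpoly N).eval μ = 0 := by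
  rw [spectrum.mem_iff, Matrix.isUnit_iff_isUnit_det, isUnit_iff_ne_zero, not_not,
    eval_charpoly', Algebra.algebraMap_eq_smul_one]

lemma spectrum_map_eq_of_charpoly_eq {M₁ M₂ : Matrix (Fin n) (Fin n) ℝ}
    (h : M₁.charpoly = M₂.charpoly) :
    spectrum ℂ (M₁.map (algebraMap ℝ ℂ)) = spectrum ℂ (M₂.map (algebraMap ℝ ℂ)) := by
  ext μ
  rw [mem_spectrum_iff_root, mem_spectrum_iff_root,
    Matrix.charpoly_map, Matrix.charpoly_map, h]

lemma specRad_eq_of_charpoly_eq {M₁ M₂ : Matrix (Fin n) (Fin n) ℝ}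
    (h : M₁.charpoly = M₂.charpoly) : specRad M₁ = specRad M₂ := by
  unfold specRad spectralRadius
  rw [spectrum_map_eq_of_charpoly_eq h]

lemma specRad_lt_one_of_charpoly_Xpow {M : Matrix (Fin n) (Fin n) ℝ}
    (h : M.charpoly = X ^ n) : specRad M < 1 := by
  have hsub : spectrum ℂ (M.map (algebraMap ℝ ℂ)) ⊆ {0} := by
    intro μ hμ
    rw [mem_spectrum_iff_root, Matrix.charpoly_map, h] at hμ
    simp only [Polynomial.map_pow, map_X, eval_pow, eval_X] at hμ
    have : μ = 0 := by
      by_contra hne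
      exact hne (by
        have := pow_eq_zero_iff' (M₀ := ℂ) |>.mp hμ
        exact this.1)
    simp [this]
  unfold specRad spectralRadius
  refine lt_of_le_of_lt (iSup₂_le fun k hk => ?_) (by norm_num : (0 : ENNReal) < 1)
  have : k = 0 := hsub hk
  simp [this]



lemma not_bounded_of_ray {m n : ℕ} (S : Set (Matrix (Fin m) (Fin n) ℝ))
    (K₀ : Matrix (Fin m) (Fin n) ℝ) (v : Fin m → ℝ) (w : Fin n → ℝ)
    (hv : v ≠ 0) (hw : w ≠ 0)
    (hmem : ∀ t : ℝ, K₀ + t • vecMulVec v w ∈ S) :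
    ¬ Bornology.IsBounded S := by
  intro hB
  obtain ⟨C, hC⟩ := isBounded_iff_forall_norm_le.1 hB
  obtain ⟨i, hi⟩ := Function.ne_iff.1 hv
  obtain ⟨j, hj⟩ := Function.ne_iff.1 hw
  have hi' : v i ≠ 0 := hi
  have hj' : w j ≠ 0 := hj
  set a : ℝ := v i * w j with ha
  have ha0 : a ≠ 0 := mul_ne_zero hi' hj'
  set t : ℝ := (C + 1 + |K₀ i j|) / |a| with ht
  have hmem' := hmem t
  have hnorm := hC _ hmem'
  have hentry : |(K₀ + t • vecMulVec v w) i j| ≤ C := by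
    calc |(K₀ + t • vecMulVec v w) i j|
        = ‖(K₀ + t • vecMulVec v w) i j‖ := (Real.norm_eq_abs _).symm
      _ ≤ ‖K₀ + t • vecMulVec v w‖ := Matrix.norm_entry_le_entrywise_sup_norm _
      _ ≤ C := hnorm
  have hC0 : 0 ≤ C := le_trans (norm_nonneg _) (by simpa using hC _ (by simpa using hmem 0))
  have hval : (K₀ + t • vecMulVec v w) i j = K₀ i j + t * a := by
    simp [Matrix.add_apply, Matrix.smul_apply, vecMulVec_apply, ha, smul_eq_mul, mul_assoc]
  have htpos : 0 ≤ t := by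
    apply div_nonneg
    · positivity
    · positivity
  have hta : |t * a| = C + 1 + |K₀ i j| := by
    rw [abs_mul, abs_of_nonneg htpos, ht, div_mul_cancel₀]
    exact abs_ne_zero.2 ha0
  have habs : C + 1 ≤ |K₀ i j + t * a| := by
    have h1 : |t * a| - |K₀ i j| ≤ |K₀ i j + t * a| := by
      have := abs_sub_abs_le_abs_sub (t * a) (-(K₀ i j))
      simp only [abs_neg, sub_neg_eq_add] at this
      calc |t * a| - |K₀ i j| ≤ |t * a + K₀ i j| := this
        _ = |K₀ i j + t * a| := by rw [add_comm]
    rw [hta] at h1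
    linarith
  rw [hval] at hentry
  linarith


lemma smul_vecMulVec_left {m : ℕ} (t : ℝ) (v : Fin m → ℝ) (w : Fin n → ℝ) :
    vecMulVec (t • v) w = t • vecMulVec v w := by
  ext i j
  simp only [Matrix.smul_apply, vecMulVec_apply, Pi.smul_apply, smul_eq_mul]
  ring

lemma exists_vecMul_eq_zero' {M : Matrix (Fin n) (Fin n) ℝ} :
    (∃ v ≠ 0, v ᵥ* M = 0) ↔ M.det = 0 :=
  Matrix.exists_vecMul_eq_zero_iff

end StabHelper

/-- If `m ≥ 2` and the set of stabilizing gains `S = {K : ρ(A+BK) < 1}` is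
nonempty, then `S` is unbounded.  (We assume `n ≥ 1`, i.e. the state space is
nontrivial, as is implicit in the discussion.) -/
theorem stmt_2 {n m : ℕ} (hn : 1 ≤ n) (hm : 2 ≤ m) (A : Matrix (Fin n) (Fin n) ℝ)
    (B : Matrix (Fin n) (Fin m) ℝ)
    (hS : {K : Matrix (Fin m) (Fin n) ℝ | specRad (A + B * K) < 1}.Nonempty) :
    ¬ Bornology.IsBounded
      {K : Matrix (Fin m) (Fin n) ℝ | specRad (A + B * K) < 1} := by
  obtain ⟨K₀, hK₀⟩ := hS
  have hK₀' : specRad (A + B * K₀) < 1 := hK₀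
  set M : Matrix (Fin n) (Fin n) ℝ := A + B * K₀ with hM
  set e₀ : Fin m → ℝ := Pi.single ⟨0, by omega⟩ 1 with he₀
  have he₀0 : e₀ ≠ 0 := by
    intro h0
    have := congrFun h0 ⟨0, by omega⟩
    rw [he₀, Pi.single_eq_same] at this
    exact one_ne_zero this
  set b₁ : Fin n → ℝ := B *ᵥ e₀ with hb₁
  by_cases hdet : (Matrix.of fun r k : Fin n => (M ^ (k : ℕ) *ᵥ b₁) r).det = 0
  · -- the Krylov space of b₁ is degenerate: a spectrum-preserving unbounded ray
    obtain ⟨c, hc0, hcK⟩ := StabHelper.exists_vecMul_eq_zero'.2 hdet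
    have horthn : ∀ k < n, c ⬝ᵥ (M ^ k *ᵥ b₁) = 0 := by
      intro k hk
      have h := congrFun hcK ⟨k, hk⟩
      simpa [Matrix.vecMul, dotProduct] using h
    have horth := StabHelper.dot_krylov_ext M b₁ c horthn
    apply StabHelper.not_bounded_of_ray _ K₀ e₀ c he₀0 hc0
    intro t
    show specRad (A + B * (K₀ + t • vecMulVec e₀ c)) < 1
    have hBK : A + B * (K₀ + t • vecMulVec e₀ c) = M + vecMulVec b₁ (t • c) := by
      rw [Matrix.mul_add, ← add_assoc, ← hM, Matrix.mul_smul,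
        StabHelper.mul_vecMulVec, ← hb₁, StabHelper.smul_vecMulVec]
    rw [hBK]
    have hcp : (M + vecMulVec b₁ (t • c)).charpoly = M.charpoly := by
      rw [StabHelper.charpoly_add_vecMulVec,
        StabHelper.gpair_eq_zero_krylov (c := t • c) (fun k => ?_), sub_zero]
      rw [smul_dotProduct, horth k, smul_zero]
    rw [StabHelper.specRad_eq_of_charpoly_eq hcp]
    exact hK₀'
  · -- b₁ is cyclic: place the characteristic polynomial at Xⁿ, then use a left
    -- null vector of the resulting matrix
    obtain ⟨c₀, hc₀⟩ := StabHelper.pole_placement M b₁ hdet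
    set M' : Matrix (Fin n) (Fin n) ℝ := M + vecMulVec b₁ c₀ with hM'
    have hdet' : M'.det = 0 := by
      rw [Matrix.det_eq_sign_charpoly_coeff, hc₀, Polynomial.coeff_X_pow,
        if_neg (by omega), mul_zero]
    obtain ⟨w, hw0, hwM⟩ := StabHelper.exists_vecMul_eq_zero'.2 hdet'
    set e₁ : Fin m → ℝ := Pi.single ⟨1, by omega⟩ 1 with he₁
    set b₂ : Fin n → ℝ := B *ᵥ e₁ with hb₂
    have hv : ∃ v : Fin m → ℝ, v ≠ 0 ∧ w ⬝ᵥ (B *ᵥ v) = 0 := by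
      by_cases hb : w ⬝ᵥ b₁ = 0
      · exact ⟨e₀, he₀0, hb⟩
      · refine ⟨(w ⬝ᵥ b₂) • e₀ - (w ⬝ᵥ b₁) • e₁, ?_, ?_⟩
        · intro h0
          have h1 := congrFun h0 ⟨1, by omega⟩
          rw [Pi.sub_apply, Pi.smul_apply, Pi.smul_apply, he₀, he₁, Pi.single_eq_same,
            Pi.single_eq_of_ne (by simp [Fin.ext_iff]), Pi.zero_apply] at h1
          simp only [smul_eq_mul, mul_zero, mul_one, zero_sub, neg_eq_zero] at h1
          exact hb h1
        · rw [Matrix.mulVec_sub, Matrix.mulVec_smul, Matrix.mulVec_smul, ← hb₁, ← hb₂,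
            dotProduct_sub, dotProduct_smul, dotProduct_smul]
          simp only [smul_eq_mul]
          ring
    obtain ⟨v, hv0, hvz⟩ := hv
    apply StabHelper.not_bounded_of_ray _ (K₀ + vecMulVec e₀ c₀) v w hv0 hw0
    intro t
    show specRad (A + B * (K₀ + vecMulVec e₀ c₀ + t • vecMulVec v w)) < 1
    have hBK : A + B * (K₀ + vecMulVec e₀ c₀ + t • vecMulVec v w)
        = M' + vecMulVec (t • (B *ᵥ v)) w := by
      rw [Matrix.mul_add, Matrix.mul_add, Matrix.mul_smul, StabHelper.mul_vecMulVec,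
        StabHelper.mul_vecMulVec, ← hb₁, StabHelper.smul_vecMulVec_left]
      rw [hM', hM]
      abel
    rw [hBK]
    apply StabHelper.specRad_lt_one_of_charpoly_Xpow (n := n)
    rw [StabHelper.charpoly_add_vecMulVec, hc₀,
      StabHelper.gpair_eq_zero_left_null hwM (by rw [dotProduct_smul, hvz, smul_zero]),
      sub_zero]
end

section
/- The set of stabilizing static state-feedback gains S = {K : ρ(A+BK) < 1} is path-connected. -/
open Matrix ComplexOrder

set_option linter.unusedSectionVars false
set_option maxHeartbeats 1000000

section Schur
variable {m n : Type*} [Fintype m] [Fintype n] [DecidableEq m] [DecidableEq n]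

theorem myPosDef_fromBlocks₁₁ {A : Matrix m m ℝ} (B : Matrix m n ℝ) (D : Matrix n n ℝ)
    (hA : A.PosDef) [Invertible A] :
    (fromBlocks A B Bᴴ D).PosDef ↔ (D - Bᴴ * A⁻¹ * B).PosDef := by
  constructor
  · intro h
    have hherm : (D - Bᴴ * A⁻¹ * B).IsHermitian :=
      (Matrix.IsHermitian.fromBlocks₁₁ B D hA.1).mp h.1
    refine Matrix.PosDef.of_dotProduct_mulVec_pos hherm fun x hx => ?_
    have hy : (-((A⁻¹ * B) *ᵥ x) ⊕ᵥ x) ≠ 0 := by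
      intro h0
      apply hx
      funext i
      exact congrFun h0 (Sum.inr i)
    have := h.dotProduct_mulVec_pos hy
    rwa [dotProduct_mulVec, Matrix.schur_complement_eq₁₁ B D _ _ hA.1, neg_add_cancel,
      dotProduct_zero, zero_add, ← dotProduct_mulVec] at this
  · intro h
    refine Matrix.PosDef.of_dotProduct_mulVec_pos ((Matrix.IsHermitian.fromBlocks₁₁ B D hA.1).mpr h.1) fun z hz => ?_
    rw [dotProduct_mulVec, ← Sum.elim_comp_inl_inr z,
      Matrix.schur_complement_eq₁₁ B D _ _ hA.1]
    by_cases hy : z ∘ Sum.inr = 0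
    · have hx : z ∘ Sum.inl ≠ 0 := by
        intro hx0
        apply hz
        funext i
        cases i with
        | inl i => exact congrFun hx0 i
        | inr i => exact congrFun hy i
      rw [hy]
      simp only [mulVec_zero, add_zero, star_zero, zero_dotProduct, zero_vecMul,
        dotProduct_zero, add_zero]
      rw [← dotProduct_mulVec]
      exact hA.dotProduct_mulVec_pos hx
    · have h1 : 0 ≤ star (z ∘ Sum.inl + (A⁻¹ * B) *ᵥ (z ∘ Sum.inr)) ᵥ* A ⬝ᵥ
          (z ∘ Sum.inl + (A⁻¹ * B) *ᵥ (z ∘ Sum.inr)) := by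
        rw [← dotProduct_mulVec]
        exact hA.posSemidef.dotProduct_mulVec_nonneg _
      have h2 : 0 < star (z ∘ Sum.inr) ᵥ* (D - Bᴴ * A⁻¹ * B) ⬝ᵥ (z ∘ Sum.inr) := by
        rw [← dotProduct_mulVec]
        exact h.dotProduct_mulVec_pos hy
      linarith

theorem posDef_of_fromBlocks {A : Matrix m m ℝ} {B : Matrix m n ℝ} {C : Matrix n m ℝ}
    {D : Matrix n n ℝ} (h : (fromBlocks A B C D).PosDef) : A.PosDef := by
  refine Matrix.PosDef.of_dotProduct_mulVec_pos ?_ ?_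
  · ext i j
    have := congrFun (congrFun h.1 (Sum.inl i)) (Sum.inl j)
    simpa [conjTranspose_apply, fromBlocks] using this
  · intro x hx
    have hz : (x ⊕ᵥ (0 : n → ℝ)) ≠ 0 := by
      intro h0
      apply hx
      funext i
      exact congrFun h0 (Sum.inl i)
    have := h.dotProduct_mulVec_pos hz
    simpa [fromBlocks_mulVec, dotProduct, Fintype.sum_sum_type, mulVec_zero] using this

section Cplx
variable {p q : Type*} [Fintype p] [Fintype q] [DecidableEq p] [DecidableEq q]

/-- complexification of a real matrix -/
noncomputable abbrev cplx (M : Matrix p q ℝ) : Matrix p q ℂ := M.map (algebraMap ℝ ℂ)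

lemma cplx_entry_star (M : Matrix p q ℝ) (i : p) (j : q) :
    star (cplx M i j) = cplx M i j := by
  simp [Matrix.map_apply, Complex.star_def, Complex.conj_ofReal]

lemma star_cplx_mulVec (M : Matrix p q ℝ) (v : q → ℂ) :
    star (cplx M *ᵥ v) = cplx M *ᵥ star v := by
  funext i
  simp only [Pi.star_apply, mulVec, dotProduct, star_sum, star_mul']
  refine Finset.sum_congr rfl fun j _ => ?_
  rw [cplx_entry_star, mul_comm]

lemma cplx_transpose (M : Matrix p q ℝ) : (cplx M)ᵀ = cplx Mᵀ := by
  simp only [Matrix.transpose_map]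

lemma posDef_cplx {S : Matrix p p ℝ} (hS : S.PosDef) : (cplx S).PosDef := by
  obtain ⟨B, hB⟩ : ∃ B : Matrix p p ℝ, S = Bᴴ * B := by
    open scoped MatrixOrder in
    obtain ⟨X, hX, -, hXS⟩ := CFC.exists_sqrt_of_isSelfAdjoint_of_quasispectrumRestricts hS.1
      (QuasispectrumRestricts.nnreal_of_nonneg hS.posSemidef.nonneg)
    exact ⟨X, by rw [← hXS, ← Matrix.star_eq_conjTranspose, hX.star_eq]⟩
  have hdet : B.det ≠ 0 := by
    intro h0
    have : S.det = 0 := by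
      rw [hB, Matrix.det_mul, h0, mul_zero]
    exact hS.det_pos.ne' this
  have hBc : (cplx B).det ≠ 0 := by
    have : (cplx B).det = algebraMap ℝ ℂ B.det :=
      ((algebraMap ℝ ℂ).map_det B).symm
    rw [this]
    simpa using hdet
  haveI : Invertible (cplx B) := (cplx B).invertibleOfIsUnitDet (isUnit_iff_ne_zero.mpr hBc)
  have hSc : cplx S = (cplx B)ᴴ * cplx B := by
    have : cplx S = cplx (Bᴴ * B) := by rw [hB]
    rw [this]
    ext i j
    simp [Matrix.map_apply, Matrix.mul_apply, Matrix.conjTranspose_apply,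
      Complex.star_def, Complex.conj_ofReal]
  rw [hSc]
  refine Matrix.PosDef.of_dotProduct_mulVec_pos (Matrix.isHermitian_conjTranspose_mul_self _) fun x hx => ?_
  have hBx : cplx B *ᵥ x ≠ 0 := by
    intro h0
    apply hx
    have := Matrix.mulVec_injective_of_invertible (cplx B)
    have h1 : cplx B *ᵥ x = cplx B *ᵥ 0 := by simpa [Matrix.mulVec_zero] using h0
    exact this h1
  have : star x ⬝ᵥ ((cplx B)ᴴ * cplx B) *ᵥ x = star (cplx B *ᵥ x) ⬝ᵥ (cplx B *ᵥ x) := by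
    rw [← Matrix.mulVec_mulVec, Matrix.dotProduct_mulVec, ← Matrix.star_mulVec]
  rw [this]
  exact Matrix.dotProduct_star_self_pos_iff.mpr hBx
end Cplx

section Eig
variable {p : Type*} [Fintype p] [DecidableEq p]

lemma exists_eigvec_transpose {M : Matrix p p ℝ} {z : ℂ}
    (hz : z ∈ spectrum ℂ (cplx M)) :
    ∃ v : p → ℂ, v ≠ 0 ∧ (cplx M)ᵀ *ᵥ v = z • v := by
  rw [spectrum.mem_iff] at hz
  have hdet : ((algebraMap ℂ (Matrix p p ℂ)) z - cplx M).det = 0 := by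
    by_contra h0
    exact hz ((Matrix.isUnit_iff_isUnit_det _).mpr (isUnit_iff_ne_zero.mpr h0))
  have hdetT : ((algebraMap ℂ (Matrix p p ℂ)) z - (cplx M)ᵀ).det = 0 := by
    rw [show (algebraMap ℂ (Matrix p p ℂ)) z - (cplx M)ᵀ
        = ((algebraMap ℂ (Matrix p p ℂ)) z - cplx M)ᵀ by
      rw [Matrix.transpose_sub]
      congr 1
      rw [Matrix.algebraMap_eq_diagonal]
      exact (Matrix.diagonal_transpose _).symm]
    rw [Matrix.det_transpose]
    exact hdet
  obtain ⟨v, hv, hv0⟩ := (Matrix.exists_mulVec_eq_zero_iff).mpr hdetT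
  refine ⟨v, hv, ?_⟩
  have := sub_eq_zero.mpr hv0.symm
  rw [Matrix.sub_mulVec] at hv0
  have h1 : (algebraMap ℂ (Matrix p p ℂ)) z *ᵥ v = z • v := by
    rw [Matrix.algebraMap_eq_diagonal]
    funext i
    simp [Matrix.mulVec_diagonal]
  rw [h1] at hv0
  linear_combination (norm := module) -hv0

lemma specRad_lt_one_of_forall {M : Matrix p p ℝ}
    (h : ∀ z ∈ spectrum ℂ (cplx M), ‖z‖₊ < 1) : specRad M < 1 := by
  unfold specRad spectralRadius
  by_cases hemp : spectrum ℂ (cplx M) = ∅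
  · rw [hemp]
    simp
  · have hfin : (spectrum ℂ (cplx M)).Finite := Matrix.finite_spectrum _
    have hne : ((fun z : ℂ => (‖z‖₊ : ENNReal)) '' spectrum ℂ (cplx M)).Nonempty :=
      (Set.nonempty_iff_ne_empty.mpr hemp).image _
    have hfin' : ((fun z : ℂ => (‖z‖₊ : ENNReal)) '' spectrum ℂ (cplx M)).Finite :=
      hfin.image _
    have hmem := hne.csSup_mem hfin'
    rw [show ⨆ k ∈ spectrum ℂ (cplx M), (‖k‖₊ : ENNReal)
        = sSup ((fun z : ℂ => (‖z‖₊ : ENNReal)) '' spectrum ℂ (cplx M)) from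
      (sSup_image).symm]
    obtain ⟨z, hzmem, hzeq⟩ := hmem
    rw [← hzeq]
    show ((‖z‖₊ : ENNReal)) < 1
    exact_mod_cast h z hzmem
end Eig

section Lyap2
variable {p : Type*} [Fintype p] [DecidableEq p]

lemma cplx_mul {M N : Matrix p p ℝ} : cplx (M * N) = cplx M * cplx N :=
  map_mul ((algebraMap ℝ ℂ).mapMatrix) M N

lemma cplx_sub {M N : Matrix p p ℝ} : cplx (M - N) = cplx M - cplx N :=
  map_sub ((algebraMap ℝ ℂ).mapMatrix) M N

lemma specRad_lt_one_of_lyap {M P : Matrix p p ℝ} (hP : P.PosDef)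
    (hQ : (P - M * P * Mᵀ).PosDef) : specRad M < 1 := by
  apply specRad_lt_one_of_forall
  intro z hz
  obtain ⟨v, hv, hveq⟩ := exists_eigvec_transpose hz
  have hPc := posDef_cplx hP
  have hQc := posDef_cplx hQ
  set c : ℂ := star v ⬝ᵥ cplx P *ᵥ v with hc_def
  have hc : 0 < c := hPc.dotProduct_mulVec_pos hv
  have key : star v ⬝ᵥ cplx (M * P * Mᵀ) *ᵥ v = z * ((starRingEnd ℂ) z * c) := by
    rw [cplx_mul, cplx_mul]
    rw [← Matrix.mulVec_mulVec, ← Matrix.mulVec_mulVec]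
    have h1 : cplx Mᵀ *ᵥ v = z • v := by rw [← cplx_transpose]; exact hveq
    rw [h1, Matrix.mulVec_smul, Matrix.mulVec_smul, dotProduct_smul, smul_eq_mul]
    congr 1
    rw [Matrix.dotProduct_mulVec]
    have h2 : star v ᵥ* cplx M = (starRingEnd ℂ) z • star v := by
      rw [← Matrix.mulVec_transpose, cplx_transpose, ← star_cplx_mulVec,
        ← cplx_transpose, hveq]
      funext i
      simp [star_smul, Complex.star_def]
    rw [h2, smul_dotProduct]
    rfl
  have hpos : 0 < c - z * ((starRingEnd ℂ) z * c) := by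
    have := hQc.dotProduct_mulVec_pos hv
    rwa [cplx_sub, Matrix.sub_mulVec, dotProduct_sub, key] at this
  -- pass to real parts
  have hcre : 0 < c.re := (Complex.lt_def.mp hc).1
  have hq : z * (starRingEnd ℂ) z = (Complex.normSq z : ℂ) := by
    rw [Complex.mul_conj]
  have hre : 0 < c.re - Complex.normSq z * c.re := by
    have h0 := (Complex.lt_def.mp hpos).1
    have : (c - z * ((starRingEnd ℂ) z * c)).re = c.re - Complex.normSq z * c.re := by
      rw [show z * ((starRingEnd ℂ) z * c) = (z * (starRingEnd ℂ) z) * c by ring, hq]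
      simp [Complex.sub_re, Complex.mul_re, Complex.ofReal_re, Complex.ofReal_im]
    rw [this] at h0
    simpa using h0
  have hnq : Complex.normSq z < 1 := by nlinarith
  have habs : ‖z‖ < 1 := by
    have h1 : ‖z‖ ^ 2 = Complex.normSq z := by
      rw [Complex.normSq_eq_norm_sq]
    nlinarith [norm_nonneg z]
  exact_mod_cast habs
end Lyap2

section Gelfand
variable {p : Type*} [Fintype p] [DecidableEq p]


noncomputable def toCLM : Matrix p p ℂ ≃ₐ[ℂ] ((p → ℂ) →L[ℂ] (p → ℂ)) :=
  (Matrix.toLinAlgEquiv').trans (Module.End.toContinuousLinearMap (𝕜 := ℂ) (p → ℂ))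

lemma toCLM_apply (X : Matrix p p ℂ) (v : p → ℂ) : (toCLM X) v = X *ᵥ v := rfl

lemma specRad_toCLM (X : Matrix p p ℂ) :
    spectralRadius ℂ (toCLM X) = spectralRadius ℂ X := by
  unfold spectralRadius
  rw [AlgEquiv.spectrum_eq]

lemma entry_le_norm_toCLM (X : Matrix p p ℂ) (i j : p) : ‖X i j‖ ≤ ‖toCLM X‖ := by
  calc ‖X i j‖ = ‖(X *ᵥ Pi.single j 1) i‖ := by rw [Matrix.mulVec_single]; simp
  _ ≤ ‖X *ᵥ Pi.single j 1‖ := norm_le_pi_norm _ i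
  _ = ‖(toCLM X) (Pi.single j 1)‖ := by rw [toCLM_apply]
  _ ≤ ‖toCLM X‖ * ‖Pi.single (M := fun _ : p => ℂ) j 1‖ := (toCLM X).le_opNorm _
  _ = ‖toCLM X‖ := by rw [Pi.norm_single]; simp

lemma entry_decay {M : Matrix p p ℝ}
    (h : spectralRadius ℂ (cplx M) < 1) :
    ∃ r : ℝ, 0 ≤ r ∧ r < 1 ∧ ∃ N : ℕ, ∀ k ≥ N, ∀ i j, |(M ^ k) i j| ≤ r ^ k := by
  set T := toCLM (cplx M) with hT
  have hrad : spectralRadius ℂ T < 1 := by rw [specRad_toCLM]; exact h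
  obtain ⟨ρr, h1, h2⟩ := exists_between hrad
  have hρtop : ρr ≠ ⊤ := (h2.trans_le le_top).ne_top
  set r : NNReal := ρr.toNNReal with hrdef
  have hrcoe : (r : ENNReal) = ρr := ENNReal.coe_toNNReal hρtop
  have hrlt1 : (r : ℝ) < 1 := by
    have : (r : ENNReal) < 1 := by rw [hrcoe]; exact h2
    exact_mod_cast this
  have hev := (spectrum.pow_nnnorm_pow_one_div_tendsto_nhds_spectralRadius T).eventually_lt_const h1
  obtain ⟨N, hN⟩ := Filter.eventually_atTop.mp hev
  refine ⟨r, r.coe_nonneg, hrlt1, max N 1, fun k hk i j => ?_⟩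
  have hkN : k ≥ N := le_trans (le_max_left _ _) hk
  have hk1 : (k : ℝ) ≠ 0 := by
    have : 1 ≤ k := le_trans (le_max_right _ _) hk
    positivity
  have hbound : (‖T ^ k‖₊ : ENNReal) ≤ ρr ^ k := by
    have h3 := hN k hkN
    have h4 : ((‖T ^ k‖₊ : ENNReal) ^ (1 / (k:ℝ))) ^ (k : ℝ) ≤ ρr ^ (k : ℝ) :=
      ENNReal.rpow_le_rpow h3.le (by positivity)
    rwa [← ENNReal.rpow_mul, one_div_mul_cancel hk1, ENNReal.rpow_one,
      ENNReal.rpow_natCast] at h4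
  have hTk : ‖T ^ k‖ ≤ (r : ℝ) ^ k := by
    rw [← hrcoe, ← ENNReal.coe_pow, ENNReal.coe_le_coe] at hbound
    calc ‖T ^ k‖ = ((‖T ^ k‖₊ : NNReal) : ℝ) := rfl
    _ ≤ ((r ^ k : NNReal) : ℝ) := by exact_mod_cast hbound
    _ = (r : ℝ) ^ k := by push_cast; ring
  have hentry : |(M ^ k) i j| ≤ ‖T ^ k‖ := by
    have h5 : T ^ k = toCLM (cplx (M ^ k)) := by
      rw [hT, ← map_pow]
      congr 1
      exact (map_pow ((algebraMap ℝ ℂ).mapMatrix) M k).symm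
    rw [h5]
    have h6 := entry_le_norm_toCLM (cplx (M ^ k)) i j
    rwa [show ‖cplx (M ^ k) i j‖ = |(M ^ k) i j| by
      simp [Matrix.map_apply, Complex.norm_real]] at h6
  exact hentry.trans hTk
end Gelfand

section LyapCons
variable {p : Type*} [Fintype p] [DecidableEq p]

lemma exists_lyap {M : Matrix p p ℝ}
    (h : specRad M < 1) :
    ∃ P : Matrix p p ℝ, P.PosDef ∧ (P - M * P * Mᵀ).PosDef := by
  obtain ⟨r, hr0, hr1, N, hN⟩ := entry_decay (h : spectralRadius ℂ (cplx M) < 1)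
  set g : ℕ → Matrix p p ℝ := fun k => M ^ k * (M ^ k)ᵀ with hg
  have hsum : Summable g := by
    refine Pi.summable.mpr ?_
    intro i
    rw [Pi.summable]
    intro j
    apply Summable.of_norm_bounded_eventually_nat (g := fun k => (Fintype.card p : ℝ) * (r ^ 2) ^ k)
      (Summable.mul_left _ (summable_geometric_of_lt_one (by positivity) (by nlinarith)))
    filter_upwards [Filter.eventually_atTop.mpr ⟨N, fun k hk => hN k hk⟩] with k hk
    have : |g k i j| ≤ (Fintype.card p : ℝ) * (r ^ 2) ^ k := by
      rw [hg]
      simp only [Matrix.mul_apply, Matrix.transpose_apply]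
      calc |∑ l, (M ^ k) i l * (M ^ k) j l| ≤ ∑ l, |(M ^ k) i l * (M ^ k) j l| :=
        Finset.abs_sum_le_sum_abs _ _
      _ ≤ ∑ _l : p, r ^ k * r ^ k := by
        apply Finset.sum_le_sum
        intro l _
        rw [abs_mul]
        exact mul_le_mul (hk i l) (hk j l) (abs_nonneg _) (by positivity)
      _ = (Fintype.card p : ℝ) * (r ^ 2) ^ k := by
        rw [Finset.sum_const, Finset.card_univ, nsmul_eq_mul]
        congr 1
        rw [← pow_add, ← two_mul, pow_mul]
    simpa using this
  set P : Matrix p p ℝ := ∑' k, g k with hPdef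
  -- the congruence map as a continuous linear map
  let L : Matrix p p ℝ →ₗ[ℝ] Matrix p p ℝ :=
    { toFun := fun X => M * X * Mᵀ
      map_add' := fun X Y => by simp [Matrix.mul_add, Matrix.add_mul]
      map_smul' := fun a X => by
        simp [Matrix.mul_smul, Matrix.smul_mul] }
  have hLP : M * P * Mᵀ = ∑' k, (M * g k * Mᵀ) := by
    have := (LinearMap.toContinuousLinearMap L).map_tsum hsum
    simpa [L, P] using this
  have hshift : ∀ k, M * g k * Mᵀ = g (k + 1) := by
    intro k
    rw [hg]
    simp only [pow_succ' M k, Matrix.transpose_mul, Matrix.mul_assoc]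
  have hP1 : P = 1 + M * P * Mᵀ := by
    rw [hLP]
    simp_rw [hshift]
    rw [hPdef, hsum.tsum_eq_zero_add]
    congr 1
    rw [hg]
    simp
  have hgsd : ∀ k, (g k).PosSemidef := by
    intro k
    have := Matrix.posSemidef_self_mul_conjTranspose (M ^ k)
    rwa [Matrix.conjTranspose_eq_transpose_of_trivial] at this
  have hPsd : P.PosSemidef := by
    refine Matrix.PosSemidef.of_dotProduct_mulVec_nonneg ?_ ?_
    · -- hermitian
      rw [Matrix.IsHermitian, Matrix.conjTranspose_eq_transpose_of_trivial]
      let Lt : Matrix p p ℝ →ₗ[ℝ] Matrix p p ℝ :=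
        { toFun := fun X => Xᵀ
          map_add' := fun X Y => Matrix.transpose_add X Y
          map_smul' := fun a X => Matrix.transpose_smul a X }
      have ht := (LinearMap.toContinuousLinearMap Lt).map_tsum hsum
      have ht' : Pᵀ = ∑' k, (g k)ᵀ := by simpa [Lt, P] using ht
      have hterm : ∀ k, (g k)ᵀ = g k := fun k => by
        rw [← Matrix.conjTranspose_eq_transpose_of_trivial]
        exact (hgsd k).1
      rw [ht']
      simp_rw [hterm]
      rfl
    · intro x
      let φ : Matrix p p ℝ →ₗ[ℝ] ℝ :=
        { toFun := fun X => star x ⬝ᵥ X *ᵥ x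
          map_add' := fun X Y => by simp [Matrix.add_mulVec, dotProduct_add]
          map_smul' := fun a X => by
            simp [Matrix.smul_mulVec, dotProduct_smul] }
      have hφ := (LinearMap.toContinuousLinearMap φ).map_tsum hsum
      have hφ' : star x ⬝ᵥ P *ᵥ x = ∑' k, star x ⬝ᵥ g k *ᵥ x := by simpa [φ, P] using hφ
      rw [hφ']
      exact tsum_nonneg fun k => (hgsd k).dotProduct_mulVec_nonneg x
  have hMP : (M * P * Mᵀ).PosSemidef := by
    have := hPsd.mul_mul_conjTranspose_same M
    rwa [Matrix.conjTranspose_eq_transpose_of_trivial] at this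
  have hPD : P.PosDef := by
    rw [hP1]
    exact Matrix.PosDef.one.add_posSemidef hMP
  refine ⟨P, hPD, ?_⟩
  have : P - M * P * Mᵀ = 1 := by
    nth_rewrite 1 [hP1]
    exact add_sub_cancel_right 1 _
  rw [this]
  exact Matrix.PosDef.one
end LyapCons

section Main2

lemma posDef_smul {p : Type*} [Fintype p] {X : Matrix p p ℝ} (hX : X.PosDef)
    {a : ℝ} (ha : 0 < a) : (a • X).PosDef := by
  refine Matrix.PosDef.of_dotProduct_mulVec_pos ?_ (fun x hx => ?_)
  · show (a • X)ᴴ = a • X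
    rw [Matrix.conjTranspose_smul, hX.1]
    congr 1
  · rw [Matrix.smul_mulVec, dotProduct_smul, smul_eq_mul]
    exact mul_pos ha (hX.dotProduct_mulVec_pos hx)


/-- The set of stabilizing static state-feedback gains
`S = {K : ρ(A+BK) < 1}` is path-connected (assuming it is nonempty, i.e.
`(A,B)` is stabilizable). -/
theorem stmt_9 {n m : ℕ} (A : Matrix (Fin n) (Fin n) ℝ)
    (B : Matrix (Fin n) (Fin m) ℝ)
    (hS : {K : Matrix (Fin m) (Fin n) ℝ | specRad (A + B * K) < 1}.Nonempty) :
    IsPathConnected {K : Matrix (Fin m) (Fin n) ℝ | specRad (A + B * K) < 1} := by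
  classical
  set S := {K : Matrix (Fin m) (Fin n) ℝ | specRad (A + B * K) < 1} with hSdef
  set N : Matrix (Fin n) (Fin n) ℝ × Matrix (Fin m) (Fin n) ℝ → Matrix (Fin n) (Fin n) ℝ :=
    fun q => A * q.1 + B * q.2 with hNdef
  set 𝒞 : Set (Matrix (Fin n) (Fin n) ℝ × Matrix (Fin m) (Fin n) ℝ) :=
    {q | (fromBlocks q.1 (N q)ᵀ (N q) q.1).PosDef} with h𝒞def
  set f : Matrix (Fin n) (Fin n) ℝ × Matrix (Fin m) (Fin n) ℝ → Matrix (Fin m) (Fin n) ℝ :=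
    fun q => q.2 * q.1⁻¹ with hfdef
  -- membership in 𝒞 rephrased
  have hTT : ∀ X : Matrix (Fin n) (Fin n) ℝ, Xᵀᴴ = X := fun X => by
    rw [Matrix.conjTranspose_eq_transpose_of_trivial, Matrix.transpose_transpose]
  have hmem : ∀ P Y, (P, Y) ∈ 𝒞 ↔ (P.PosDef ∧ (P - (A * P + B * Y) * P⁻¹ * (A * P + B * Y)ᵀ).PosDef) := by
    intro P Y
    constructor
    · intro h
      have hP : P.PosDef := posDef_of_fromBlocks h
      haveI : Invertible P := P.invertibleOfIsUnitDet hP.det_pos.ne'.isUnit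
      refine ⟨hP, ?_⟩
      have hiff := myPosDef_fromBlocks₁₁ ((N (P, Y))ᵀ) P hP
      rw [hTT] at hiff
      exact hiff.mp h
    · rintro ⟨hP, hQ⟩
      haveI : Invertible P := P.invertibleOfIsUnitDet hP.det_pos.ne'.isUnit
      have hiff := myPosDef_fromBlocks₁₁ ((N (P, Y))ᵀ) P hP
      rw [hTT] at hiff
      exact hiff.mpr hQ
  -- image identity
  have himg : S = f '' 𝒞 := by
    ext K
    constructor
    · intro hK
      obtain ⟨P, hP, hQ⟩ := exists_lyap hK
      haveI : Invertible P := P.invertibleOfIsUnitDet hP.det_pos.ne'.isUnit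
      have hPsymm : Pᵀ = P := by
        rw [← Matrix.conjTranspose_eq_transpose_of_trivial]; exact hP.1
      refine ⟨(P, K * P), ?_, ?_⟩
      · refine (hmem P (K * P)).mpr ⟨hP, ?_⟩
        have hN : A * P + B * (K * P) = (A + B * K) * P := by
          rw [Matrix.add_mul, Matrix.mul_assoc]
        rw [hN]
        have hsimp : (A + B * K) * P * P⁻¹ * ((A + B * K) * P)ᵀ
            = (A + B * K) * P * (A + B * K)ᵀ := by
          rw [Matrix.transpose_mul, hPsymm, Matrix.mul_assoc, Matrix.mul_assoc,
            ← Matrix.mul_assoc P⁻¹ P _, Matrix.nonsing_inv_mul P hP.det_pos.ne'.isUnit,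
            Matrix.one_mul, ← Matrix.mul_assoc]
        rw [hsimp]
        exact hQ
      · show K * P * P⁻¹ = K
        rw [Matrix.mul_assoc, Matrix.mul_nonsing_inv P hP.det_pos.ne'.isUnit, Matrix.mul_one]
    · rintro ⟨⟨P, Y⟩, hq, rfl⟩
      obtain ⟨hP, hQ⟩ := (hmem P Y).mp hq
      haveI : Invertible P := P.invertibleOfIsUnitDet hP.det_pos.ne'.isUnit
      have hPsymm : Pᵀ = P := by
        rw [← Matrix.conjTranspose_eq_transpose_of_trivial]; exact hP.1
      have hYP : Y = (Y * P⁻¹) * P := by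
        rw [Matrix.mul_assoc, Matrix.nonsing_inv_mul P hP.det_pos.ne'.isUnit, Matrix.mul_one]
      show specRad (A + B * (Y * P⁻¹)) < 1
      apply specRad_lt_one_of_lyap hP
      have hN : A * P + B * Y = (A + B * (Y * P⁻¹)) * P := by
        rw [Matrix.add_mul]
        congr 1
        conv_rhs => rw [Matrix.mul_assoc, Matrix.mul_assoc,
          Matrix.nonsing_inv_mul P hP.det_pos.ne'.isUnit, Matrix.mul_one]
      rw [hN] at hQ
      have hsimp : (A + B * (Y * P⁻¹)) * P * P⁻¹ * ((A + B * (Y * P⁻¹)) * P)ᵀ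
          = (A + B * (Y * P⁻¹)) * P * (A + B * (Y * P⁻¹))ᵀ := by
        rw [Matrix.transpose_mul, hPsymm, Matrix.mul_assoc, Matrix.mul_assoc,
          ← Matrix.mul_assoc P⁻¹ P _, Matrix.nonsing_inv_mul P hP.det_pos.ne'.isUnit,
          Matrix.one_mul, ← Matrix.mul_assoc]
      rwa [hsimp] at hQ
  -- convexity
  have hconv : Convex ℝ 𝒞 := by
    intro q1 hq1 q2 hq2 a b ha hb hab
    have hNlin : N (a • q1 + b • q2) = a • N q1 + b • N q2 := by
      show A * (a • q1.1 + b • q2.1) + B * (a • q1.2 + b • q2.2) = _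
      rw [Matrix.mul_add, Matrix.mul_add, Matrix.mul_smul, Matrix.mul_smul,
        Matrix.mul_smul, Matrix.mul_smul, smul_add, smul_add]
      abel
    have hblock : fromBlocks (a • q1.1 + b • q2.1) (N (a • q1 + b • q2))ᵀ
        (N (a • q1 + b • q2)) (a • q1.1 + b • q2.1)
        = a • fromBlocks q1.1 (N q1)ᵀ (N q1) q1.1 + b • fromBlocks q2.1 (N q2)ᵀ (N q2) q2.1 := by
      rw [Matrix.fromBlocks_smul, Matrix.fromBlocks_smul, Matrix.fromBlocks_add, hNlin,
        Matrix.transpose_add, Matrix.transpose_smul, Matrix.transpose_smul]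
    show (fromBlocks _ _ _ _).PosDef
    rw [show (a • q1 + b • q2).1 = a • q1.1 + b • q2.1 from rfl, hblock]
    rcases eq_or_lt_of_le ha with ha0 | hapos
    · have hb1 : b = 1 := by linarith
      simp only [← ha0, hb1, zero_smul, one_smul, zero_add]
      exact hq2
    · rcases eq_or_lt_of_le hb with hb0 | hbpos
      · have ha1 : a = 1 := by linarith
        simp only [← hb0, ha1, zero_smul, one_smul, add_zero]
        exact hq1
      · exact (posDef_smul hq1 hapos).add (posDef_smul hq2 hbpos)
  -- continuity
  have hcont : ContinuousOn f 𝒞 := by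
    intro q hq
    have hP : q.1.PosDef := posDef_of_fromBlocks hq
    have hdet : IsUnit q.1.det := hP.det_pos.ne'.isUnit
    apply ContinuousAt.continuousWithinAt
    have hinv : ContinuousAt (fun q : Matrix (Fin n) (Fin n) ℝ × Matrix (Fin m) (Fin n) ℝ => q.1⁻¹) q := by
      have h1 : ContinuousAt Inv.inv q.1 := by
        apply continuousAt_matrix_inv
        have := NormedRing.inverse_continuousAt hdet.unit
        rwa [IsUnit.unit_spec] at this
      exact h1.comp continuousAt_fst
    have h2 : ContinuousAt (fun q : Matrix (Fin n) (Fin n) ℝ × Matrix (Fin m) (Fin n) ℝ => q.2) q :=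
      continuousAt_snd
    have hmul : Continuous (fun ab : Matrix (Fin m) (Fin n) ℝ × Matrix (Fin n) (Fin n) ℝ => ab.1 * ab.2) :=
      Continuous.matrix_mul continuous_fst continuous_snd
    exact hmul.continuousAt.comp (h2.prodMk hinv)
  -- nonempty
  obtain ⟨K0, hK0⟩ := hS
  have himg' : K0 ∈ f '' 𝒞 := himg ▸ hK0
  obtain ⟨q0, hq0, _⟩ := himg'
  rw [himg]
  exact ((hconv.isPathConnected ⟨q0, hq0⟩).image' hcont)
end Main2
end Schur
end

section
/- Stability certificate for the Euclidean retraction: let K ∈ S (so A_cl = A+BK satisfies ρ(A_cl) < 1), let V ∈ ℝ^{m×n}, and set s = 1 / (2 λ_max(L(A_clᵀ, I)) · ‖BV‖₂). Then for every η with 0 ≤ η ≤ s, the gain K + ηV is stabilizing: ρ(A + B(K+ηV)) < 1. -/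
open Matrix

/-- The solution `L(A,Q) = ∑ₖ Aᵏ Q (Aᵀ)ᵏ` of the discrete Lyapunov equation
`P = A P Aᵀ + Q` (unique when `ρ(A) < 1`). -/
noncomputable def lyap {n : ℕ} (A Q : Matrix (Fin n) (Fin n) ℝ) :
    Matrix (Fin n) (Fin n) ℝ :=
  ∑' k : ℕ, A ^ k * Q * Aᵀ ^ k

open scoped Matrix.Norms.L2Operator

open scoped ComplexOrder ENNReal Pointwise
open Filter

namespace StabilityCert

/-- ℓ² operator norm bound in sum-of-squares form. -/
lemma sq_sum_mulVec_le {a b : ℕ} {𝕜 : Type*} [RCLike 𝕜] (M : Matrix (Fin a) (Fin b) 𝕜)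
    (x : Fin b → 𝕜) : ∑ i, ‖(M *ᵥ x) i‖ ^ 2 ≤ ‖M‖ ^ 2 * ∑ j, ‖x j‖ ^ 2 := by
  have h0 := M.l2_opNorm_mulVec ((EuclideanSpace.equiv (Fin b) 𝕜).symm x)
  rw [EuclideanSpace.norm_eq, EuclideanSpace.norm_eq] at h0
  have h : Real.sqrt (∑ i, ‖(M *ᵥ x) i‖ ^ 2) ≤ ‖M‖ * Real.sqrt (∑ j, ‖x j‖ ^ 2) := h0
  have h1 : (0:ℝ) ≤ ∑ i, ‖(M *ᵥ x) i‖ ^ 2 := Finset.sum_nonneg fun i _ => sq_nonneg _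
  have h2 : (0:ℝ) ≤ ∑ j, ‖x j‖ ^ 2 := Finset.sum_nonneg fun i _ => sq_nonneg _
  have := mul_self_le_mul_self (Real.sqrt_nonneg _) h
  rw [Real.mul_self_sqrt h1] at this
  calc ∑ i, ‖(M *ᵥ x) i‖ ^ 2 ≤ (‖M‖ * Real.sqrt (∑ j, ‖x j‖ ^ 2)) *
        (‖M‖ * Real.sqrt (∑ j, ‖x j‖ ^ 2)) := this
    _ = ‖M‖ ^ 2 * ∑ j, ‖x j‖ ^ 2 := by
        rw [mul_mul_mul_comm, Real.mul_self_sqrt h2, sq]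

/-- entries are bounded by the ℓ² operator norm -/
lemma entry_le_norm {a b : ℕ} {𝕜 : Type*} [RCLike 𝕜] (M : Matrix (Fin a) (Fin b) 𝕜)
    (i : Fin a) (j : Fin b) : ‖M i j‖ ≤ ‖M‖ := by
  have h := sq_sum_mulVec_le M (Pi.single j 1)
  rw [Matrix.mulVec_single] at h
  have h2 : ∑ j', ‖Pi.single (M := fun _ => 𝕜) j 1 j'‖ ^ 2 = 1 := by
    rw [Finset.sum_eq_single j] <;> simp +contextual [Pi.single_apply]
  rw [h2, mul_one] at h
  have h3 : ‖M i j‖ ^ 2 ≤ ‖M‖ ^ 2 := by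
    refine le_trans ?_ h
    refine Finset.single_le_sum (f := fun i => ‖M i j * 1‖ ^ 2) (fun i _ => sq_nonneg _)
      (Finset.mem_univ i) |>.trans_eq' ?_
    simp
  have := Real.sqrt_le_sqrt h3
  rwa [Real.sqrt_sq (norm_nonneg _), Real.sqrt_sq (norm_nonneg _)] at this

/-- complexified real matrices satisfy the real ℓ² operator norm bound -/
lemma sq_sum_map_mulVec_le {a b : ℕ} (M : Matrix (Fin a) (Fin b) ℝ) (x : Fin b → ℂ) :
    ∑ i, ‖((M.map (algebraMap ℝ ℂ)) *ᵥ x) i‖ ^ 2 ≤ ‖M‖ ^ 2 * ∑ j, ‖x j‖ ^ 2 := by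
  set xr := fun j => (x j).re with hxr
  set xi := fun j => (x j).im with hxi
  have hre : ∀ i, ((M.map (algebraMap ℝ ℂ)) *ᵥ x) i = Complex.mk ((M *ᵥ xr) i) ((M *ᵥ xi) i) := by
    intro i
    apply Complex.ext <;>
      simp [Matrix.mulVec, dotProduct, Complex.re_sum, Complex.im_sum, Complex.mul_re,
        Complex.mul_im, Finset.sum_add_distrib, hxr, hxi]
  have hnorm : ∀ z : ℂ, ‖z‖ ^ 2 = z.re ^ 2 + z.im ^ 2 := fun z => by
    rw [Complex.sq_norm, Complex.normSq_apply]; ring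
  have hr := sq_sum_mulVec_le M xr
  have hi := sq_sum_mulVec_le M xi
  simp only [Real.norm_eq_abs, sq_abs] at hr hi
  calc ∑ i, ‖((M.map (algebraMap ℝ ℂ)) *ᵥ x) i‖ ^ 2
      = ∑ i, ((M *ᵥ xr) i ^ 2 + (M *ᵥ xi) i ^ 2) := by
        refine Finset.sum_congr rfl fun i _ => ?_
        rw [hnorm, hre i]
    _ = (∑ i, (M *ᵥ xr) i ^ 2) + ∑ i, (M *ᵥ xi) i ^ 2 := Finset.sum_add_distrib
    _ ≤ ‖M‖ ^ 2 * (∑ j, xr j ^ 2) + ‖M‖ ^ 2 * (∑ j, xi j ^ 2) := add_le_add hr hi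
    _ = ‖M‖ ^ 2 * ∑ j, (xr j ^ 2 + xi j ^ 2) := by rw [Finset.sum_add_distrib]; ring
    _ = ‖M‖ ^ 2 * ∑ j, ‖x j‖ ^ 2 := by
        congr 1
        exact (Finset.sum_congr rfl fun j _ => (hnorm (x j)).symm)

/-- geometric decay of powers when the spectral radius is `< 1` -/
lemma decay {n : ℕ} (Ac : Matrix (Fin n) (Fin n) ℂ) (h : spectralRadius ℂ Ac < 1) :
    ∃ (ρ : ℝ) (N : ℕ), 0 ≤ ρ ∧ ρ < 1 ∧ ∀ k, N ≤ k → ‖Ac ^ k‖ ≤ ρ ^ k := by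
  obtain ⟨c, hc1, hc2⟩ := exists_between h
  have hctop : c ≠ ⊤ := (hc2.trans_le le_top).ne
  have hgel := spectrum.pow_nnnorm_pow_one_div_tendsto_nhds_spectralRadius Ac
  have hev : ∀ᶠ k : ℕ in atTop, ((‖Ac ^ k‖₊ : ℝ≥0∞) ^ (1 / (k:ℝ))) < c :=
    hgel.eventually_lt_const hc1
  obtain ⟨N, hN⟩ := hev.exists_forall_of_atTop
  refine ⟨c.toReal, max N 1, ENNReal.toReal_nonneg, ?_, ?_⟩
  · have := ENNReal.toReal_lt_toReal hctop (by norm_num : (1:ℝ≥0∞) ≠ ⊤) |>.mpr hc2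
    simpa using this
  · intro k hk
    have hk1 : 1 ≤ k := le_trans (le_max_right _ _) hk
    have hkN : N ≤ k := le_trans (le_max_left _ _) hk
    have h1 := hN k hkN
    have hkne : (k:ℝ) ≠ 0 := Nat.cast_ne_zero.mpr (by omega)
    have h2 : (‖Ac ^ k‖₊ : ℝ≥0∞) ≤ c ^ (k:ℕ) := by
      calc (‖Ac ^ k‖₊ : ℝ≥0∞) = ((‖Ac ^ k‖₊ : ℝ≥0∞) ^ (1/(k:ℝ))) ^ (k:ℝ) := by
            rw [← ENNReal.rpow_mul, one_div_mul_cancel hkne, ENNReal.rpow_one]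
        _ ≤ c ^ (k:ℝ) := ENNReal.rpow_le_rpow h1.le (by positivity)
        _ = c ^ (k:ℕ) := by rw [ENNReal.rpow_natCast]
    have h4 : ‖Ac ^ k‖ ≤ (c ^ (k:ℕ)).toReal := by
      have := ENNReal.toReal_mono (by simp [ENNReal.pow_ne_top hctop]) h2
      simpa [coe_nnnorm] using this
    rwa [ENNReal.toReal_pow] at h4

/-- the key scalar inequality -/
lemma key_ineq (t p c0 a e w : ℝ) (ht : 1 ≤ t) (hc0 : 0 < c0) (hpt : p ≤ t * c0)
    (ha : a ^ 2 = p - c0) (ha0 : 0 ≤ a) (he : e ^ 2 ≤ c0 / (4 * t)) (he0 : 0 ≤ e)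
    (hw : w ^ 2 = p) (hw0 : 0 ≤ w) : a + e < w := by
  by_contra hcon
  push_neg at hcon
  have ht0 : (0:ℝ) < t := lt_of_lt_of_le one_pos ht
  have hE4t : e ^ 2 * (4 * t) ≤ c0 := (le_div_iff₀ (by positivity)).mp he
  have h1 : p ≤ (a + e) ^ 2 := by
    rw [← hw]; exact pow_le_pow_left₀ hw0 hcon 2
  have h2 : c0 - e ^ 2 ≤ 2 * a * e := by nlinarith [sq_nonneg (a+e)]
  have h3 : 0 ≤ c0 - e ^ 2 := by nlinarith
  have h4 : (c0 - e ^ 2) ^ 2 ≤ 4 * (p - c0) * e ^ 2 := by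
    have := pow_le_pow_left₀ h3 h2 2
    nlinarith [this]
  have hint1 : p * e ^ 2 ≤ (t * c0) * e ^ 2 :=
    mul_le_mul_of_nonneg_right hpt (sq_nonneg e)
  have h6 : c0 ^ 2 + (e ^ 2) ^ 2 ≤ (4 * t - 2) * c0 * e ^ 2 := by nlinarith
  have h7 : (4 * t) * (c0 ^ 2 + (e ^ 2) ^ 2) ≤ (4 * t) * ((4 * t - 2) * c0 * e ^ 2) :=
    mul_le_mul_of_nonneg_left h6 (by linarith)
  have hint2 : (4 * t - 2) * c0 * (e ^ 2 * (4 * t)) ≤ (4 * t - 2) * c0 * c0 :=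
    mul_le_mul_of_nonneg_left hE4t (by nlinarith)
  nlinarith [h7, hint2, mul_nonneg (by linarith : (0:ℝ) ≤ 4*t) (sq_nonneg (e^2)),
    mul_pos hc0 hc0, mul_nonneg ht0.le (sq_nonneg e)]

open scoped MatrixOrder in
/-- factorization of a positive semidefinite matrix -/
lemma exists_conjTranspose_mul_self {n : ℕ} {𝕜 : Type*} [RCLike 𝕜]
    {M : Matrix (Fin n) (Fin n) 𝕜} (h : M.PosSemidef) :
    ∃ B : Matrix (Fin n) (Fin n) 𝕜, Bᴴ * B = M := by
  refine ⟨CFC.sqrt M, ?_⟩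
  have h1 : (CFC.sqrt M)ᴴ = CFC.sqrt M := (CFC.sqrt_nonneg M).posSemidef.isHermitian
  rw [h1]
  exact CFC.sqrt_mul_sqrt_self M h.nonneg

/-- complexification preserves positive semidefiniteness -/
lemma posSemidef_map {n : ℕ} {S : Matrix (Fin n) (Fin n) ℝ} (hS : S.PosSemidef) :
    (S.map (algebraMap ℝ ℂ)).PosSemidef := by
  obtain ⟨B, hB⟩ := exists_conjTranspose_mul_self hS
  replace hB := hB.symm
  have hmap : S.map (algebraMap ℝ ℂ)
      = (B.map (algebraMap ℝ ℂ))ᴴ * (B.map (algebraMap ℝ ℂ)) := by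
    rw [hB, Matrix.map_mul, Matrix.conjTranspose_map]
    intro x
    simp [Complex.conj_ofReal]
  rw [hmap]
  exact Matrix.posSemidef_conjTranspose_mul_self _

/-- spectrum elements of matrices over a field are eigenvalues -/
lemma exists_eigvec {n : ℕ} {𝕜 : Type*} [Field 𝕜] [DecidableEq 𝕜]
    {M : Matrix (Fin n) (Fin n) 𝕜} {μ : 𝕜}
    (h : μ ∈ spectrum 𝕜 M) : ∃ v, v ≠ 0 ∧ M *ᵥ v = μ • v := by
  rw [spectrum.mem_iff] at h
  have hdet : (algebraMap 𝕜 (Matrix (Fin n) (Fin n) 𝕜) μ - M).det = 0 := by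
    by_contra hd
    exact h ((Matrix.isUnit_iff_isUnit_det _).mpr (isUnit_iff_ne_zero.mpr hd))
  obtain ⟨v, hv0, hv⟩ := (Matrix.exists_mulVec_eq_zero_iff).mpr hdet
  refine ⟨v, hv0, ?_⟩
  rw [Algebra.algebraMap_eq_smul_one, Matrix.sub_mulVec, Matrix.smul_mulVec,
    Matrix.one_mulVec, sub_eq_zero] at hv
  exact hv.symm

/-- summability of matrix series from entrywise summability -/
lemma summable_of_entries {n : ℕ} {f : ℕ → Matrix (Fin n) (Fin n) ℝ}
    (h : ∀ i j, Summable fun k => f k i j) : Summable f :=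
  Pi.summable.mpr fun i => Pi.summable.mpr (h i)

end StabilityCert

open StabilityCert in
set_option maxHeartbeats 2000000 in
/-- Stability certificate for the Euclidean retraction: if `K` is stabilizing,
`lmax` is the largest eigenvalue of `P = L((A+BK)ᵀ, I)`, and
`0 ≤ η ≤ s := 1 / (2 lmax ‖BV‖₂)` (with `‖·‖` the ℓ²-operator/spectral norm;
the condition is stated multiplicatively as `η · (2 lmax ‖BV‖₂) ≤ 1`, which
also covers the convention `s = +∞` when `BV = 0`), then `K + ηV` is
stabilizing. -/
theorem stmt_10 {n m : ℕ} (A : Matrix (Fin n) (Fin n) ℝ)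
    (B : Matrix (Fin n) (Fin m) ℝ) (K V : Matrix (Fin m) (Fin n) ℝ)
    (hK : specRad (A + B * K) < 1)
    (lmax : ℝ) (hlmax : IsGreatest (spectrum ℝ (lyap (A + B * K)ᵀ 1)) lmax)
    (η : ℝ) (hη0 : 0 ≤ η) (hη : η * (2 * lmax * ‖B * V‖) ≤ 1) :
    specRad (A + B * (K + η • V)) < 1 := by
  classical
  set A₀ : Matrix (Fin n) (Fin n) ℝ := A + B * K with hA₀
  set W : Matrix (Fin n) (Fin n) ℝ := B * V with hWdef
  have hgoal : A + B * (K + η • V) = A₀ + η • W := by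
    rw [Matrix.mul_add, Matrix.mul_smul, hA₀, add_assoc]
  rw [hgoal]
  set CC : ℝ →+* ℂ := algebraMap ℝ ℂ with hCC
  set f : ℕ → Matrix (Fin n) (Fin n) ℝ := fun k => (A₀ᵀ) ^ k * 1 * (A₀ᵀᵀ) ^ k with hf
  have hf' : ∀ k, f k = (A₀ ^ k)ᵀ * A₀ ^ k := by
    intro k
    simp [hf, Matrix.transpose_pow, Matrix.transpose_transpose, Matrix.mul_one]
  set P : Matrix (Fin n) (Fin n) ℝ := lyap A₀ᵀ 1 with hPdef
  -- summability of the Lyapunov series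
  have hmapPow : ∀ k : ℕ, (A₀ ^ k).map CC = (A₀.map CC) ^ k := by
    intro k
    simpa [RingHom.mapMatrix_apply] using map_pow (CC.mapMatrix (m := Fin n)) A₀ k
  have hentry : ∀ (k : ℕ) (l i : Fin n), |(A₀ ^ k) l i| ≤ ‖(A₀.map CC) ^ k‖ := by
    intro k l i
    calc |(A₀ ^ k) l i| = ‖(((A₀ ^ k) l i : ℝ) : ℂ)‖ := (Complex.norm_real _).symm
      _ = ‖((A₀.map CC) ^ k) l i‖ := by rw [← hmapPow]; rfl
      _ ≤ ‖(A₀.map CC) ^ k‖ := entry_le_norm _ _ _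
  have habs : ∀ (k : ℕ) (i j : Fin n), |f k i j| ≤ (n : ℝ) * ‖(A₀.map CC) ^ k‖ ^ 2 := by
    intro k i j
    rw [hf' k]
    have he : ((A₀ ^ k)ᵀ * A₀ ^ k) i j = ∑ l, (A₀ ^ k) l i * (A₀ ^ k) l j := by
      rw [Matrix.mul_apply]
      exact Finset.sum_congr rfl fun l _ => by rw [Matrix.transpose_apply]
    rw [he]
    calc |∑ l, (A₀ ^ k) l i * (A₀ ^ k) l j| ≤ ∑ l, |(A₀ ^ k) l i * (A₀ ^ k) l j| :=
          Finset.abs_sum_le_sum_abs _ _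
      _ ≤ ∑ _l : Fin n, ‖(A₀.map CC) ^ k‖ ^ 2 := by
          refine Finset.sum_le_sum fun l _ => ?_
          rw [abs_mul, sq]
          exact mul_le_mul (hentry k l i) (hentry k l j) (abs_nonneg _) (norm_nonneg _)
      _ = (n : ℝ) * ‖(A₀.map CC) ^ k‖ ^ 2 := by simp [Finset.sum_const, mul_comm]
  have hsum : Summable f := by
    obtain ⟨ρ, N, hρ0, hρ1, hdec⟩ := decay (A₀.map CC) hK
    apply summable_of_entries
    intro i j
    rw [← summable_nat_add_iff N]
    have hgeo : Summable (fun k => ((n : ℝ) * (ρ ^ 2) ^ N) * (ρ ^ 2) ^ k) :=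
      Summable.mul_left _ (summable_geometric_of_lt_one (by positivity) (by nlinarith))
    refine Summable.of_abs (Summable.of_nonneg_of_le (fun k => abs_nonneg _) (fun k => ?_) hgeo)
    calc |f (k + N) i j| ≤ (n : ℝ) * ‖(A₀.map CC) ^ (k + N)‖ ^ 2 := habs _ i j
      _ ≤ (n : ℝ) * (ρ ^ (k + N)) ^ 2 := by
          have h1 := hdec (k + N) (by omega)
          have h2 : (0:ℝ) ≤ ‖(A₀.map CC) ^ (k + N)‖ := norm_nonneg _
          have := mul_le_mul h1 h1 h2 (by positivity)
          nlinarith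
      _ = ((n : ℝ) * (ρ ^ 2) ^ N) * (ρ ^ 2) ^ k := by ring
  have hPsum : HasSum f P := hsum.hasSum
  -- the discrete Lyapunov equation
  have hlyap : A₀ᵀ * P * A₀ + 1 = P := by
    have hcont : Continuous fun M : Matrix (Fin n) (Fin n) ℝ => A₀ᵀ * M * A₀ :=
      (continuous_const.matrix_mul continuous_id).matrix_mul continuous_const
    let φ : Matrix (Fin n) (Fin n) ℝ →+ Matrix (Fin n) (Fin n) ℝ :=
      { toFun := fun M => A₀ᵀ * M * A₀
        map_zero' := by simp
        map_add' := fun x y => by simp [Matrix.mul_add, Matrix.add_mul] }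
    have hmap : HasSum (fun k => A₀ᵀ * f k * A₀) (A₀ᵀ * P * A₀) := hPsum.map φ hcont
    have hshift : (fun k => A₀ᵀ * f k * A₀) = fun k => f (k + 1) := by
      funext k
      rw [hf' k, hf' (k + 1)]
      simp [pow_succ, Matrix.transpose_mul, Matrix.mul_assoc]
    rw [hshift] at hmap
    have h2 := (hasSum_nat_add_iff 1).mp hmap
    have h3 := h2.unique hPsum
    have hf0 : ∑ i ∈ Finset.range 1, f i = 1 := by simp [hf]
    rw [hf0] at h3
    exact h3
  have hPm1 : HasSum (fun k => f (k + 1)) (P - 1) := by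
    apply (hasSum_nat_add_iff 1).mpr
    have hf0 : ∑ i ∈ Finset.range 1, f i = 1 := by simp [hf]
    rw [hf0, sub_add_cancel]
    exact hPsum
  -- symmetry and positivity of `P`
  have hfPSD : ∀ k, (f k).PosSemidef := by
    intro k
    rw [hf' k]
    simpa [Matrix.conjTranspose_eq_transpose_of_trivial] using
      Matrix.posSemidef_conjTranspose_mul_self (A₀ ^ k)
  have hPsym : Pᵀ = P := by
    have h0 : P = ∑' k, f k := rfl
    rw [h0, Matrix.transpose_tsum]
    exact tsum_congr fun k => by
      rw [hf' k]
      simp [Matrix.transpose_mul, Matrix.transpose_transpose]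
  have hPSD : (P - 1).PosSemidef := by
    refine Matrix.PosSemidef.of_dotProduct_mulVec_nonneg ?_ ?_
    · show (P - 1)ᴴ = P - 1
      rw [Matrix.conjTranspose_eq_transpose_of_trivial, Matrix.transpose_sub, hPsym,
        Matrix.transpose_one]
    · intro x
      have hcont : Continuous fun M : Matrix (Fin n) (Fin n) ℝ => star x ⬝ᵥ (M *ᵥ x) :=
        continuous_const.dotProduct (continuous_id.matrix_mulVec continuous_const)
      let ψ : Matrix (Fin n) (Fin n) ℝ →+ ℝ :=
        { toFun := fun M => star x ⬝ᵥ (M *ᵥ x)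
          map_zero' := by simp
          map_add' := fun M N => by simp [Matrix.add_mulVec, dotProduct_add] }
      have hq := (hPm1.map ψ hcont).tsum_eq
      have h0 : star x ⬝ᵥ ((P - 1) *ᵥ x) = ∑' k, star x ⬝ᵥ (f (k + 1) *ᵥ x) := hq.symm
      rw [h0]
      exact tsum_nonneg fun k => (hfPSD (k + 1)).dotProduct_mulVec_nonneg x
  have hPPSD : P.PosSemidef := by
    have := hPSD.add Matrix.PosSemidef.one
    simpa using this
  -- `lmax ≥ 1`
  have hlm_mem : lmax ∈ spectrum ℝ P := hlmax.1
  have hlm1 : 1 ≤ lmax := by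
    obtain ⟨v, hv0, hv⟩ := exists_eigvec hlm_mem
    have hvv : 0 < v ⬝ᵥ v := by
      rcases lt_or_eq_of_le (Finset.sum_nonneg fun i _ => mul_self_nonneg (v i) :
        (0:ℝ) ≤ v ⬝ᵥ v) with h | h
      · exact h
      · exact absurd (dotProduct_self_eq_zero.mp h.symm) hv0
    have h0 := hPSD.dotProduct_mulVec_nonneg v
    have h1 : star v ⬝ᵥ ((P - 1) *ᵥ v) = (lmax - 1) * (v ⬝ᵥ v) := by
      rw [Matrix.sub_mulVec, Matrix.one_mulVec, hv]
      simp only [star_trivial, dotProduct_sub, dotProduct_smul, smul_eq_mul]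
      ring
    rw [h1] at h0
    nlinarith
  have hlm0 : (0:ℝ) < lmax := lt_of_lt_of_le one_pos hlm1
  -- `lmax • 1 - P` is positive semidefinite
  have hT : (lmax • (1 : Matrix (Fin n) (Fin n) ℝ) - P).PosSemidef := by
    have hherm : (lmax • (1 : Matrix (Fin n) (Fin n) ℝ) - P).IsHermitian := by
      show _ᴴ = _
      rw [Matrix.conjTranspose_eq_transpose_of_trivial, Matrix.transpose_sub,
        Matrix.transpose_smul, Matrix.transpose_one, hPsym]
    apply hherm.posSemidef_iff_eigenvalues_nonneg.mpr
    intro i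
    show 0 ≤ hherm.eigenvalues i
    have hmem : hherm.eigenvalues i ∈ (({lmax} : Set ℝ) - spectrum ℝ P) := by
      rw [spectrum.singleton_sub_eq, Algebra.algebraMap_eq_smul_one]
      exact hherm.eigenvalues_mem_spectrum_real i
    obtain ⟨r, hr, s, hs, hrs⟩ := Set.mem_sub.mp hmem
    rw [Set.mem_singleton_iff] at hr
    subst hr
    have := hlmax.2 hs
    linarith [hrs ▸ sub_nonneg.mpr this]
  -- complexification
  set Pc : Matrix (Fin n) (Fin n) ℂ := P.map CC with hPc
  set Ac : Matrix (Fin n) (Fin n) ℂ := A₀.map CC with hAc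
  have hsubc : (P - 1).map CC = Pc - 1 := by
    simpa [RingHom.mapMatrix_apply] using map_sub (CC.mapMatrix (m := Fin n)) P 1
  have hP1c : ((P - 1).map CC).PosSemidef := posSemidef_map hPSD
  have hTc : ((lmax • (1 : Matrix (Fin n) (Fin n) ℝ) - P).map CC).PosSemidef := posSemidef_map hT
  have hPcPSD : Pc.PosSemidef := posSemidef_map hPPSD
  have hAH : (A₀ᵀ).map CC = Acᴴ := by
    ext i j
    simp [Matrix.conjTranspose_apply, Matrix.map_apply, Complex.conj_ofReal, hAc, hCC]
  have hlyapC : Acᴴ * Pc * Ac = Pc - 1 := by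
    have h0 := congrArg (CC.mapMatrix (m := Fin n)) hlyap
    simp only [map_add, _root_.map_mul, _root_.map_one, RingHom.mapMatrix_apply] at h0
    rw [hAH] at h0
    exact eq_sub_of_add_eq h0
  -- quadratic forms
  set q0 : (Fin n → ℂ) → ℝ := fun y => ∑ i, ‖y i‖ ^ 2 with hq0
  set qP : (Fin n → ℂ) → ℝ := fun y => RCLike.re (star y ⬝ᵥ (Pc *ᵥ y)) with hqP
  have hstar : ∀ y : Fin n → ℂ, RCLike.re (star y ⬝ᵥ y) = q0 y := by
    intro y
    simp only [dotProduct, Pi.star_apply, map_sum, hq0]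
    refine Finset.sum_congr rfl fun i _ => ?_
    rw [RCLike.star_def, RCLike.conj_mul]
    simp [← Complex.ofReal_pow]
  have hi1 : ∀ y : Fin n → ℂ, q0 y ≤ qP y := by
    intro y
    have h := hP1c.re_dotProduct_nonneg y
    rw [hsubc, Matrix.sub_mulVec, dotProduct_sub, map_sub, Matrix.one_mulVec,
      hstar] at h
    simp only [hqP]
    linarith
  have hsm : (lmax • (1 : Matrix (Fin n) (Fin n) ℝ) - P).map CC
      = (lmax : ℂ) • (1 : Matrix (Fin n) (Fin n) ℂ) - Pc := by
    ext i j
    by_cases h : i = j <;>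
      simp [Matrix.map_apply, Matrix.sub_apply, Matrix.smul_apply, Matrix.one_apply, h, hCC, hPc]
  have hi2 : ∀ y : Fin n → ℂ, qP y ≤ lmax * q0 y := by
    intro y
    have h := hTc.re_dotProduct_nonneg y
    rw [hsm, Matrix.sub_mulVec, Matrix.smul_mulVec, Matrix.one_mulVec,
      dotProduct_sub, dotProduct_smul, map_sub, smul_eq_mul] at h
    have hre : RCLike.re ((lmax : ℂ) * (star y ⬝ᵥ y)) = lmax * RCLike.re (star y ⬝ᵥ y) := by
      rw [← Complex.real_smul, RCLike.smul_re]
    rw [hre, hstar] at h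
    simp only [hqP]
    linarith
  -- the sandwich identity
  have hsand : ∀ (T Q : Matrix (Fin n) (Fin n) ℂ) (y : Fin n → ℂ),
      star (T *ᵥ y) ⬝ᵥ (Q *ᵥ (T *ᵥ y)) = star y ⬝ᵥ ((Tᴴ * Q * T) *ᵥ y) := by
    intro T Q y
    rw [Matrix.star_mulVec, ← Matrix.dotProduct_mulVec, Matrix.mulVec_mulVec,
      Matrix.mulVec_mulVec]
  -- square root of Pc
  obtain ⟨S, hSS⟩ := exists_conjTranspose_mul_self hPcPSD
  have hqP_eq : ∀ y : Fin n → ℂ, qP y = q0 (S *ᵥ y) := by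
    intro y
    rw [← hstar (S *ᵥ y)]
    have h1 : star (S *ᵥ y) ⬝ᵥ (S *ᵥ y) = star y ⬝ᵥ (Pc *ᵥ y) := by
      have := hsand S 1 y
      rw [Matrix.one_mulVec, Matrix.mul_one] at this
      rw [this, hSS]
    rw [h1]
  -- euclidean norms
  have hee : ∀ y : Fin n → ℂ, ‖(EuclideanSpace.equiv (Fin n) ℂ).symm y‖ ^ 2 = q0 y := by
    intro y
    have h : ‖(EuclideanSpace.equiv (Fin n) ℂ).symm y‖ = Real.sqrt (∑ i, ‖y i‖ ^ 2) :=
      EuclideanSpace.norm_eq _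
    rw [h, Real.sq_sqrt (Finset.sum_nonneg fun i _ => sq_nonneg _)]
  -- final eigenvalue argument
  set Mc : Matrix (Fin n) (Fin n) ℂ := (A₀ + η • W).map CC with hMc
  show spectralRadius ℂ Mc < 1
  set Ec : Matrix (Fin n) (Fin n) ℂ := (η : ℂ) • (W.map CC) with hEc
  have hMcsplit : Mc = Ac + Ec := by
    ext i j
    simp [hMc, hAc, hEc, Matrix.map_apply, Matrix.add_apply, Matrix.smul_apply,
      smul_eq_mul, hCC]
  have hall : ∀ z ∈ spectrum ℂ Mc, ‖z‖₊ < 1 := by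
    intro z hz
    obtain ⟨x, hx0, hxz⟩ := exists_eigvec hz
    by_contra hz1
    push_neg at hz1
    have hz1' : (1:ℝ) ≤ ‖z‖ := by exact_mod_cast hz1
    have hc0 : 0 < q0 x := by
      obtain ⟨i, hi⟩ := Function.ne_iff.mp hx0
      refine Finset.sum_pos' (fun i _ => sq_nonneg _) ⟨i, Finset.mem_univ i, ?_⟩
      have : (0:ℝ) < ‖x i‖ := norm_pos_iff.mpr hi
      positivity
    set ee : (Fin n → ℂ) → EuclideanSpace ℂ (Fin n) :=
      fun y => (EuclideanSpace.equiv (Fin n) ℂ).symm y with heedef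
    set aa : ℝ := ‖ee (S *ᵥ (Ac *ᵥ x))‖ with haa
    set bb : ℝ := ‖ee (S *ᵥ (Ec *ᵥ x))‖ with hbb
    set ww : ℝ := ‖ee (S *ᵥ x)‖ with hww
    have hw2 : ww ^ 2 = qP x := by rw [hww, hee, hqP_eq]
    have ha2 : aa ^ 2 = qP x - q0 x := by
      rw [haa, hee, ← hqP_eq]
      have h1 : qP (Ac *ᵥ x) = RCLike.re (star x ⬝ᵥ ((Acᴴ * Pc * Ac) *ᵥ x)) := by
        simp only [hqP]
        rw [hsand]
      rw [h1, hlyapC, Matrix.sub_mulVec, dotProduct_sub, map_sub, Matrix.one_mulVec,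
        hstar]
    have he2 : bb ^ 2 ≤ q0 x / (4 * lmax) := by
      rw [hbb, hee, ← hqP_eq]
      have h1 : qP (Ec *ᵥ x) ≤ lmax * q0 (Ec *ᵥ x) := hi2 _
      have h2 : q0 (Ec *ᵥ x) = η ^ 2 * q0 ((W.map CC) *ᵥ x) := by
        rw [hEc, Matrix.smul_mulVec]
        simp only [hq0, Pi.smul_apply, smul_eq_mul, norm_mul, Complex.norm_real,
          Real.norm_eq_abs, mul_pow, sq_abs, Finset.mul_sum]
      have h3 : q0 ((W.map CC) *ᵥ x) ≤ ‖W‖ ^ 2 * q0 x := by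
        simpa [hq0, hCC] using sq_sum_map_mulVec_le W x
      have h4 : lmax * (η ^ 2 * (‖W‖ ^ 2 * q0 x)) ≤ q0 x / (4 * lmax) := by
        rw [div_eq_mul_inv]
        have hkey : (η * ‖W‖) * (2 * lmax) ≤ 1 := by
          calc (η * ‖W‖) * (2 * lmax) = η * (2 * lmax * ‖W‖) := by ring
            _ ≤ 1 := hη
        have h5 : (0:ℝ) ≤ η * ‖W‖ := mul_nonneg hη0 (norm_nonneg _)
        have h6 : ((η * ‖W‖) * (2 * lmax)) ^ 2 ≤ 1 := by
          nlinarith [mul_nonneg h5 (by linarith : (0:ℝ) ≤ 2 * lmax)]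
        have h7 : (4 * lmax) * (lmax * (η ^ 2 * (‖W‖ ^ 2 * q0 x))) ≤ q0 x := by
          nlinarith [mul_le_mul_of_nonneg_right h6 hc0.le]
        calc lmax * (η ^ 2 * (‖W‖ ^ 2 * q0 x))
            = ((4 * lmax) * (lmax * (η ^ 2 * (‖W‖ ^ 2 * q0 x)))) * (4 * lmax)⁻¹ := by
              field_simp
          _ ≤ q0 x * (4 * lmax)⁻¹ := by
              apply mul_le_mul_of_nonneg_right h7
              positivity
      calc qP (Ec *ᵥ x) ≤ lmax * q0 (Ec *ᵥ x) := h1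
        _ = lmax * (η ^ 2 * q0 ((W.map CC) *ᵥ x)) := by rw [h2]
        _ ≤ lmax * (η ^ 2 * (‖W‖ ^ 2 * q0 x)) := by
            apply mul_le_mul_of_nonneg_left _ hlm0.le
            apply mul_le_mul_of_nonneg_left h3 (sq_nonneg η)
        _ ≤ q0 x / (4 * lmax) := h4
    have hwa : ww ≤ aa + bb := by
      have h1 : S *ᵥ (Mc *ᵥ x) = S *ᵥ (Ac *ᵥ x) + S *ᵥ (Ec *ᵥ x) := by
        rw [hMcsplit, Matrix.add_mulVec, Matrix.mulVec_add]
      have h2 : S *ᵥ (Mc *ᵥ x) = z • (S *ᵥ x) := by rw [hxz, Matrix.mulVec_smul]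
      have hee_smul : ∀ (c : ℂ) (u : Fin n → ℂ), ee (c • u) = c • ee u := fun c u =>
        map_smul ((EuclideanSpace.equiv (Fin n) ℂ).symm) c u
      have hee_add : ∀ (u v : Fin n → ℂ), ee (u + v) = ee u + ee v := fun u v =>
        map_add ((EuclideanSpace.equiv (Fin n) ℂ).symm) u v
      have h3 : ‖z‖ * ww = ‖ee (S *ᵥ (Mc *ᵥ x))‖ := by
        rw [h2, hee_smul, norm_smul, hww]
      have h4 : ‖ee (S *ᵥ (Mc *ᵥ x))‖ ≤ aa + bb := by
        rw [h1, hee_add]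
        exact norm_add_le _ _
      calc ww ≤ ‖z‖ * ww := le_mul_of_one_le_left (norm_nonneg _) hz1'
        _ = ‖ee (S *ᵥ (Mc *ᵥ x))‖ := h3
        _ ≤ aa + bb := h4
    have := key_ineq lmax (qP x) (q0 x) aa bb ww hlm1 hc0 (hi2 x) ha2 (norm_nonneg _)
      he2 (norm_nonneg _) hw2 (norm_nonneg _)
    linarith
  rcases Set.eq_empty_or_nonempty (spectrum ℂ Mc) with hem | hne
  · simp [spectralRadius, hem]
  · have := spectrum.spectralRadius_lt_of_forall_lt_of_nonempty hne (r := 1) hall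
    simpa using this
end

section
/- The LQR cost J(K) = (1/2) tr((Q + KᵀRK) Y_K) with Y_K = L(A+BK, Σ) satisfies: if Σ ≻ 0, Q ⪰ 0, R ≻ 0, then J(K) ≥ (1/2)·λ_min(Σ)·tr(Q + KᵀRK) ≥ (1/2)·λ_min(Σ)·λ_min(R)·‖K‖_F², and hence J(K) → ∞ as ‖K‖_F → ∞ over stabilizing K. -/
open Matrix

/-! ### Auxiliary lemmas -/

lemma aux_geom_summable (K : ℕ) (hK : 1 ≤ K) (b c : ℝ) (hc : 0 ≤ c) (hb0 : 0 ≤ b)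
    (hb : b < 1) : Summable (fun j : ℕ => c * b ^ (j / K)) := by
  haveI : NeZero K := ⟨by omega⟩
  have hg : Summable (fun q : ℕ => c * b ^ q) :=
    (summable_geometric_of_lt_one hb0 hb).mul_left _
  have hh : Summable (fun _ : Fin K => (1:ℝ)) := summable_of_finite_support (Set.toFinite _)
  have h1 : Summable (fun p : ℕ × Fin K => (c * b ^ p.1) * (fun _ : Fin K => (1:ℝ)) p.2) :=
    hg.mul_of_nonneg hh (fun p => by positivity) (fun p => by norm_num)
  simp only [mul_one] at h1
  have h2 := (Equiv.summable_iff (Nat.divModEquiv K)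
    (f := fun p : ℕ × Fin K => c * b ^ p.1)).2 h1
  have h3 : (fun j : ℕ => c * b ^ (j / K)) =
      (fun p : ℕ × Fin K => c * b ^ p.1) ∘ (Nat.divModEquiv K) := by
    funext j; simp [Nat.divModEquiv]
  rw [h3]
  exact h2

section Summ
attribute [local instance] Matrix.frobeniusSeminormedAddCommGroup Matrix.frobeniusNormedRing
  Matrix.frobeniusNormedSpace Matrix.frobeniusNormedAlgebra

lemma aux_norm_pow_summable {k : ℕ} (A : Matrix (Fin k) (Fin k) ℝ)
    (h : spectralRadius ℂ (A.map (algebraMap ℝ ℂ)) < 1) :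
    Summable (fun j : ℕ => ‖A ^ j‖ * ‖A ^ j‖) := by
  set M : Matrix (Fin k) (Fin k) ℂ := A.map (algebraMap ℝ ℂ) with hM
  have hnorm : ∀ j : ℕ, ‖M ^ j‖ = ‖A ^ j‖ := by
    intro j
    have h1 : M ^ j = (A ^ j).map (algebraMap ℝ ℂ) := by
      have : M = (algebraMap ℝ ℂ).mapMatrix A := rfl
      rw [this, ← map_pow]; rfl
    rw [h1]
    exact Matrix.frobenius_norm_map_eq _ _ (fun a => Complex.norm_real a)
  have hG := spectrum.pow_nnnorm_pow_one_div_tendsto_nhds_spectralRadius M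
  have hev : ∀ᶠ j : ℕ in Filter.atTop, ((‖M ^ j‖₊ : ENNReal) ^ (1 / (j:ℝ))) < 1 :=
    hG.eventually_lt_const h
  obtain ⟨K, hK1, hKlt⟩ : ∃ K : ℕ, 1 ≤ K ∧ ((‖M ^ K‖₊ : ENNReal) ^ (1 / (K:ℝ))) < 1 := by
    obtain ⟨K, hK⟩ := ((Filter.eventually_ge_atTop 1).and hev).exists
    exact ⟨K, hK.1, hK.2⟩
  have haK : ‖A ^ K‖ < 1 := by
    rw [← hnorm]
    by_contra hcon
    push_neg at hcon
    have h1 : (1 : ENNReal) ≤ (‖M ^ K‖₊ : ENNReal) := by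
      rw [← ENNReal.coe_one, ENNReal.coe_le_coe]
      exact_mod_cast hcon
    have h2 : (1 : ENNReal) ≤ (‖M ^ K‖₊ : ENNReal) ^ (1 / (K:ℝ)) := by
      calc (1 : ENNReal) = 1 ^ (1 / (K:ℝ)) := (ENNReal.one_rpow _).symm
        _ ≤ _ := ENNReal.rpow_le_rpow h1 (by positivity)
    exact absurd hKlt (not_lt.2 h2)
  have ha0 : (0:ℝ) ≤ ‖A ^ K‖ := norm_nonneg _
  have hC0 : (0:ℝ) ≤ ∑ s ∈ Finset.range K, ‖A ^ s‖ :=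
    Finset.sum_nonneg fun _ _ => norm_nonneg _
  have hbound : ∀ j : ℕ, ‖A ^ j‖ ≤ (∑ s ∈ Finset.range K, ‖A ^ s‖) * ‖A ^ K‖ ^ (j / K) := by
    intro j
    have hsC : ‖A ^ (j % K)‖ ≤ ∑ s ∈ Finset.range K, ‖A ^ s‖ :=
      Finset.single_le_sum (f := fun s => ‖A ^ s‖) (fun _ _ => norm_nonneg _)
        (Finset.mem_range.2 (Nat.mod_lt _ (by omega)))
    have hdecomp : A ^ j = (A ^ K) ^ (j / K) * A ^ (j % K) := by
      rw [← pow_mul, ← pow_add, Nat.div_add_mod]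
    rcases Nat.eq_zero_or_pos (j / K) with hq | hq
    · rw [hdecomp, hq, pow_zero, pow_zero, one_mul, mul_one]
      exact hsC
    · calc ‖A ^ j‖ = ‖(A ^ K) ^ (j / K) * A ^ (j % K)‖ := by rw [← hdecomp]
        _ ≤ ‖(A ^ K) ^ (j / K)‖ * ‖A ^ (j % K)‖ := norm_mul_le _ _
        _ ≤ ‖A ^ K‖ ^ (j / K) * (∑ s ∈ Finset.range K, ‖A ^ s‖) :=
            mul_le_mul (norm_pow_le' _ hq) hsC (norm_nonneg _) (pow_nonneg ha0 _)
        _ = _ := mul_comm _ _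
  have hgeo := aux_geom_summable K hK1 (‖A ^ K‖ * ‖A ^ K‖)
    ((∑ s ∈ Finset.range K, ‖A ^ s‖) * (∑ s ∈ Finset.range K, ‖A ^ s‖))
    (mul_nonneg hC0 hC0) (mul_nonneg ha0 ha0) (by nlinarith)
  apply Summable.of_nonneg_of_le (fun j => mul_nonneg (norm_nonneg _) (norm_nonneg _)) _ hgeo
  intro j
  calc ‖A ^ j‖ * ‖A ^ j‖
      ≤ ((∑ s ∈ Finset.range K, ‖A ^ s‖) * ‖A ^ K‖ ^ (j / K)) *
        ((∑ s ∈ Finset.range K, ‖A ^ s‖) * ‖A ^ K‖ ^ (j / K)) :=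
        mul_le_mul (hbound j) (hbound j) (norm_nonneg _)
          (mul_nonneg hC0 (pow_nonneg ha0 _))
    _ = ((∑ s ∈ Finset.range K, ‖A ^ s‖) * (∑ s ∈ Finset.range K, ‖A ^ s‖)) *
        (‖A ^ K‖ * ‖A ^ K‖) ^ (j / K) := by rw [mul_pow]; ring

lemma aux_summable {k : ℕ} (A W : Matrix (Fin k) (Fin k) ℝ)
    (h : spectralRadius ℂ (A.map (algebraMap ℝ ℂ)) < 1) :
    Summable (fun j : ℕ => A ^ j * W * Aᵀ ^ j) := by
  apply Summable.of_norm_bounded ((aux_norm_pow_summable A h).mul_left ‖W‖)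
  intro j
  calc ‖A ^ j * W * Aᵀ ^ j‖ ≤ ‖A ^ j * W‖ * ‖Aᵀ ^ j‖ := Matrix.frobenius_norm_mul _ _
    _ ≤ (‖A ^ j‖ * ‖W‖) * ‖Aᵀ ^ j‖ :=
        mul_le_mul_of_nonneg_right (Matrix.frobenius_norm_mul _ _) (norm_nonneg _)
    _ = ‖W‖ * (‖A ^ j‖ * ‖A ^ j‖) := by
        rw [← transpose_pow, Matrix.frobenius_norm_transpose]; ring

end Summ

lemma aux_psd_trace_nonneg {k : ℕ} {M : Matrix (Fin k) (Fin k) ℝ} (h : M.PosSemidef) :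
    0 ≤ M.trace := by
  rw [Matrix.trace]
  apply Finset.sum_nonneg
  intro i _
  have := h.dotProduct_mulVec_nonneg (Pi.single i 1)
  simpa [dotProduct, Matrix.mulVec, Pi.single_apply, Finset.sum_ite_eq,
    Matrix.diag] using this

open scoped MatrixOrder in
lemma aux_psd_trace_mul_nonneg {k : ℕ} {M P : Matrix (Fin k) (Fin k) ℝ}
    (hM : M.PosSemidef) (hP : P.PosSemidef) : 0 ≤ (M * P).trace := by
  obtain ⟨S, rfl⟩ := CStarAlgebra.nonneg_iff_eq_star_mul_self.mp hM.nonneg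
  have h2 : (S * P * star S).PosSemidef := by
    have := hP.mul_mul_conjTranspose_same S
    rwa [← Matrix.star_eq_conjTranspose] at this
  rw [← Matrix.trace_mul_cycle]
  exact aux_psd_trace_nonneg h2

lemma aux_sub_smul_one_posSemidef {k : ℕ} {M : Matrix (Fin k) (Fin k) ℝ}
    (hM : M.IsHermitian) {c : ℝ} (hc : ∀ x ∈ spectrum ℝ M, c ≤ x) :
    (M - c • 1).PosSemidef := by
  have heig : ∀ i, c ≤ hM.eigenvalues i := fun i => hc _ (hM.eigenvalues_mem_spectrum_real i)
  have hU : (hM.eigenvectorUnitary : Matrix (Fin k) (Fin k) ℝ) *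
      star (hM.eigenvectorUnitary : Matrix (Fin k) (Fin k) ℝ) = 1 :=
    Matrix.mem_unitaryGroup_iff.mp hM.eigenvectorUnitary.2
  have key : M - c • 1 = (hM.eigenvectorUnitary : Matrix (Fin k) (Fin k) ℝ) *
      diagonal (fun i => hM.eigenvalues i - c) *
      star (hM.eigenvectorUnitary : Matrix (Fin k) (Fin k) ℝ) := by
    have hd : diagonal (fun i => hM.eigenvalues i - c) =
        diagonal (RCLike.ofReal ∘ hM.eigenvalues) - c • 1 := by
      rw [Matrix.smul_one_eq_diagonal, Matrix.diagonal_sub]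
      simp [RCLike.ofReal_real_eq_id]
    rw [hd, Matrix.mul_sub, Matrix.sub_mul]
    conv_lhs => rw [hM.spectral_theorem, Unitary.conjStarAlgAut_apply]
    congr 1
    rw [Matrix.mul_smul, Matrix.smul_mul, mul_one, hU]
  rw [key]
  have hdiag : (diagonal (fun i => hM.eigenvalues i - c)).PosSemidef :=
    Matrix.PosSemidef.diagonal (fun i => sub_nonneg.2 (heig i))
  have h2 := hdiag.mul_mul_conjTranspose_same
    (hM.eigenvectorUnitary : Matrix (Fin k) (Fin k) ℝ)
  rwa [← Matrix.star_eq_conjTranspose] at h2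

lemma aux_pos_of_mem_spectrum {k : ℕ} {M : Matrix (Fin k) (Fin k) ℝ} (hM : M.PosDef)
    {c : ℝ} (hc : c ∈ spectrum ℝ M) : 0 < c := by
  rw [spectrum.mem_iff] at hc
  have hdet : (algebraMap ℝ (Matrix (Fin k) (Fin k) ℝ) c - M).det = 0 := by
    by_contra hne
    exact hc ((Matrix.isUnit_iff_isUnit_det _).2 (Ne.isUnit hne))
  obtain ⟨v, hv0, hv⟩ := (Matrix.exists_mulVec_eq_zero_iff).2 hdet
  have hMv : M *ᵥ v = c • v := by
    have halg : algebraMap ℝ (Matrix (Fin k) (Fin k) ℝ) c = c • 1 :=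
      Algebra.algebraMap_eq_smul_one c
    rw [halg, Matrix.sub_mulVec, sub_eq_zero] at hv
    rw [← hv, Matrix.smul_mulVec, Matrix.one_mulVec]
  have h1 := hM.dotProduct_mulVec_pos hv0
  rw [hMv] at h1
  have h2 : star v ⬝ᵥ c • v = c * (v ⬝ᵥ v) := by
    simp [dotProduct_smul, star_trivial, dotProduct, Finset.mul_sum]
    exact Finset.sum_congr rfl fun i _ => by ring
  rw [h2] at h1
  have hvv : 0 < v ⬝ᵥ v := by
    obtain ⟨i, hi⟩ := Function.ne_iff.1 hv0
    apply Finset.sum_pos' (fun j _ => mul_self_nonneg _)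
    exact ⟨i, Finset.mem_univ i, mul_self_pos.2 (by simpa using hi)⟩
  by_contra hc0
  push_neg at hc0
  nlinarith

/-- quadratic form as a continuous linear map in the matrix argument -/
noncomputable def quadCLM {k : ℕ} (v : Fin k → ℝ) :
    Matrix (Fin k) (Fin k) ℝ →L[ℝ] ℝ :=
  LinearMap.toContinuousLinearMap
    { toFun := fun M => v ⬝ᵥ (M *ᵥ v)
      map_add' := by intro M N; simp [Matrix.add_mulVec, dotProduct_add]
      map_smul' := by intro c M; simp [Matrix.smul_mulVec, dotProduct_smul] }

lemma quadCLM_apply {k : ℕ} (v : Fin k → ℝ) (M : Matrix (Fin k) (Fin k) ℝ) :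
    quadCLM v M = v ⬝ᵥ (M *ᵥ v) := rfl

lemma aux_lyap_sub_psd {k : ℕ} (A' W : Matrix (Fin k) (Fin k) ℝ) (hW : W.PosSemidef)
    (hsum : Summable (fun j : ℕ => A' ^ j * W * A'ᵀ ^ j)) :
    (lyap A' W - W).PosSemidef := by
  set f : ℕ → Matrix (Fin k) (Fin k) ℝ := fun j => A' ^ j * W * A'ᵀ ^ j with hf
  have h_psd : ∀ j, (f j).PosSemidef := by
    intro j
    have := hW.mul_mul_conjTranspose_same (A' ^ j)
    simpa [Matrix.conjTranspose_eq_transpose_of_trivial, Matrix.transpose_pow, hf] using this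
  have hf0 : f 0 = W := by simp [hf]
  have hY : lyap A' W = ∑' j, f j := rfl
  have hherm : (lyap A' W).IsHermitian := by
    rw [Matrix.IsHermitian, Matrix.conjTranspose_eq_transpose_of_trivial, hY]
    have hT := hsum.hasSum.matrix_transpose
    rw [hT.tsum_eq.symm]
    congr 1
    funext j
    exact ((h_psd j).isHermitian.eq.symm.trans
      (Matrix.conjTranspose_eq_transpose_of_trivial _)).symm
  refine Matrix.PosSemidef.of_dotProduct_mulVec_nonneg ?_ ?_
  · exact (hherm.sub hW.isHermitian)
  · intro x
    have hx : star x = x := by simp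
    rw [hx, Matrix.sub_mulVec, dotProduct_sub, sub_nonneg]
    have hQs : HasSum (fun j => quadCLM x (f j)) (quadCLM x (lyap A' W)) := by
      rw [hY]
      exact hsum.hasSum.map (quadCLM x) (quadCLM x).continuous
    have hle : quadCLM x (f 0) ≤ ∑' j, quadCLM x (f j) := by
      apply Summable.le_tsum hQs.summable 0
      intro j _
      have := (h_psd j).dotProduct_mulVec_nonneg x
      rwa [hx] at this
    rw [hQs.tsum_eq] at hle
    simpa [quadCLM_apply, hf0] using hle

/-- Coercivity bounds for the LQR cost `J(K) = ½ tr((Q + KᵀRK) Y_K)` with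
`Y_K = L(A+BK, Σ)`: if `Σ ≻ 0`, `Q ⪰ 0`, `R ≻ 0`, with `λmin(Σ)`, `λmin(R)`
the smallest eigenvalues of `Σ` and `R`, then
`J(K) ≥ ½ λmin(Σ) tr(Q + KᵀRK) ≥ ½ λmin(Σ) λmin(R) ‖K‖_F²`
(note `‖K‖_F² = tr(KᵀK)`), and hence `J(K) → ∞` as `‖K‖_F → ∞` over
stabilizing `K`. -/
theorem stmt_14 {n m : ℕ} (A : Matrix (Fin n) (Fin n) ℝ)
    (B : Matrix (Fin n) (Fin m) ℝ)
    (Q W : Matrix (Fin n) (Fin n) ℝ) (R : Matrix (Fin m) (Fin m) ℝ)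
    (hW : W.PosDef) (hQ : Q.PosSemidef) (hR : R.PosDef)
    (lminS lminR : ℝ)
    (hlminS : IsLeast (spectrum ℝ W) lminS)
    (hlminR : IsLeast (spectrum ℝ R) lminR)
    (J : Matrix (Fin m) (Fin n) ℝ → ℝ)
    (hJ : ∀ K, J K = (1 / 2) * (((Q + Kᵀ * R * K) * lyap (A + B * K) W).trace)) :
    (∀ K : Matrix (Fin m) (Fin n) ℝ, specRad (A + B * K) < 1 →
      (1 / 2) * lminS * (Q + Kᵀ * R * K).trace ≤ J K ∧
      (1 / 2) * lminS * lminR * (Kᵀ * K).trace ≤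
        (1 / 2) * lminS * (Q + Kᵀ * R * K).trace) ∧
    (∀ c : ℝ, ∃ r : ℝ, ∀ K : Matrix (Fin m) (Fin n) ℝ,
      specRad (A + B * K) < 1 → r ≤ (Kᵀ * K).trace → c ≤ J K) := by
  have hlminS_pos : 0 < lminS := aux_pos_of_mem_spectrum hW hlminS.1
  have hlminR_pos : 0 < lminR := aux_pos_of_mem_spectrum hR hlminR.1
  have main : ∀ K : Matrix (Fin m) (Fin n) ℝ, specRad (A + B * K) < 1 →
      (1 / 2) * lminS * (Q + Kᵀ * R * K).trace ≤ J K ∧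
      (1 / 2) * lminS * lminR * (Kᵀ * K).trace ≤
        (1 / 2) * lminS * (Q + Kᵀ * R * K).trace := by
    intro K hstab
    have hsum : Summable (fun j : ℕ => (A + B * K) ^ j * W * (A + B * K)ᵀ ^ j) :=
      aux_summable (A + B * K) W hstab
    have hKRK : (Kᵀ * R * K).PosSemidef := by
      have := hR.posSemidef.conjTranspose_mul_mul_same K
      rwa [Matrix.conjTranspose_eq_transpose_of_trivial] at this
    have hM_psd : (Q + Kᵀ * R * K).PosSemidef := hQ.add hKRK
    have hYW : (lyap (A + B * K) W - W).PosSemidef :=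
      aux_lyap_sub_psd (A + B * K) W hW.posSemidef hsum
    have hWs : (W - lminS • 1).PosSemidef :=
      aux_sub_smul_one_posSemidef hW.1 (fun x hx => hlminS.2 hx)
    have hY : (lyap (A + B * K) W - lminS • (1 : Matrix (Fin n) (Fin n) ℝ)).PosSemidef := by
      have h : lyap (A + B * K) W - lminS • (1 : Matrix (Fin n) (Fin n) ℝ)
          = (lyap (A + B * K) W - W) + (W - lminS • 1) := by abel
      rw [h]; exact hYW.add hWs
    have htr : 0 ≤ ((Q + Kᵀ * R * K) * (lyap (A + B * K) W - lminS • 1)).trace :=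
      aux_psd_trace_mul_nonneg hM_psd hY
    have hexp : ((Q + Kᵀ * R * K) * (lyap (A + B * K) W - lminS • 1)).trace
        = ((Q + Kᵀ * R * K) * lyap (A + B * K) W).trace
          - lminS * (Q + Kᵀ * R * K).trace := by
      rw [Matrix.mul_sub, Matrix.mul_smul, mul_one, Matrix.trace_sub, Matrix.trace_smul,
        smul_eq_mul]
    have hineq1 : lminS * (Q + Kᵀ * R * K).trace
        ≤ ((Q + Kᵀ * R * K) * lyap (A + B * K) W).trace := by
      rw [hexp] at htr; linarith
    have hRs : (R - lminR • 1).PosSemidef :=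
      aux_sub_smul_one_posSemidef hR.1 (fun x hx => hlminR.2 hx)
    have hconj : (Kᵀ * (R - lminR • 1) * K).PosSemidef := by
      have := hRs.conjTranspose_mul_mul_same K
      rwa [Matrix.conjTranspose_eq_transpose_of_trivial] at this
    have hexp2 : (Kᵀ * (R - lminR • 1) * K).trace
        = (Kᵀ * R * K).trace - lminR * (Kᵀ * K).trace := by
      rw [Matrix.mul_sub, Matrix.sub_mul, Matrix.mul_smul, Matrix.mul_one, Matrix.smul_mul,
        Matrix.trace_sub, Matrix.trace_smul, smul_eq_mul]
    have hineq2 : lminR * (Kᵀ * K).trace ≤ (Kᵀ * R * K).trace := by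
      have := aux_psd_trace_nonneg hconj
      rw [hexp2] at this; linarith
    have htrQ : 0 ≤ Q.trace := aux_psd_trace_nonneg hQ
    have htrM : (Q + Kᵀ * R * K).trace = Q.trace + (Kᵀ * R * K).trace :=
      Matrix.trace_add _ _
    constructor
    · rw [hJ K]
      have h5 := mul_le_mul_of_nonneg_left hineq1 (by norm_num : (0:ℝ) ≤ 1/2)
      calc (1/2) * lminS * (Q + Kᵀ * R * K).trace
          = (1/2) * (lminS * (Q + Kᵀ * R * K).trace) := by ring
        _ ≤ (1/2) * ((Q + Kᵀ * R * K) * lyap (A + B * K) W).trace := h5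
    · have h1 : lminR * (Kᵀ * K).trace ≤ (Q + Kᵀ * R * K).trace := by
        rw [htrM]; linarith
      have h2 := mul_le_mul_of_nonneg_left h1
        (le_of_lt (by positivity : (0:ℝ) < (1/2) * lminS))
      calc (1/2) * lminS * lminR * (Kᵀ * K).trace
          = (1/2) * lminS * (lminR * (Kᵀ * K).trace) := by ring
        _ ≤ (1/2) * lminS * (Q + Kᵀ * R * K).trace := h2
  refine ⟨main, ?_⟩
  intro c
  refine ⟨c / ((1/2) * lminS * lminR), ?_⟩
  intro K hstab hr
  have hp : (0:ℝ) < (1/2) * lminS * lminR := by positivity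
  obtain ⟨h1, h2⟩ := main K hstab
  have h3 : c ≤ (1/2) * lminS * lminR * (Kᵀ * K).trace := by
    have h4 := mul_le_mul_of_nonneg_left hr (le_of_lt hp)
    rwa [mul_div_cancel₀ _ (ne_of_gt hp)] at h4
  linarith
end
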